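/- arXiv:2012.12937 — 3 statements merged into one kernel-verified Lean document; each statement's English description precedes it below -/
import Mathlib

section
/- For all y⁰, y¹ in the interior C° of C, the auxiliary controllability time is a lower bound for the true minimal controllability time: T̄_C(y⁰,y¹) ≤ T_C(y⁰,y¹). (This holds for an arbitrary measurable constraint set C; no convexity or boundedness of C is needed.) -/
noncomputable section
open MeasureTheory Set RealInnerProductSpace
open scoped ENNReal

/-- Euclidean state space `ℝ^n`. -/
abbrev Euc (n : ℕ) := EuclideanSpace ℝ (Fin n)

/-- Orthogonal projection onto a subspace, viewed as a map into the ambient space. -/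
noncomputable def projS {n : ℕ} (G : Submodule ℝ (Euc n)) (x : Euc n) : Euc n :=
  (G.orthogonalProjection x : Euc n)

/-- The set of admissible controllability times `T` for the system `ẏ = F(y) + B u`
with state constraint `y(t) ∈ C`, steering `y0` to `y1`.  The control `u` is a
measurable essentially bounded function; the absolutely continuous trajectory `y`
is encoded via the integral equation. -/
def ctrlTimes {n m : ℕ} (F : Euc n → Euc n) (B : Euc m →ₗ[ℝ] Euc n)
    (C : Set (Euc n)) (y0 y1 : Euc n) : Set ℝ :=
  {T | 0 < T ∧ ∃ u : ℝ → Euc m, ∃ y : ℝ → Euc n,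
    Measurable u ∧ (∃ M : ℝ, ∀ t ∈ Icc (0:ℝ) T, ‖u t‖ ≤ M) ∧
    ContinuousOn y (Icc 0 T) ∧
    IntervalIntegrable (fun s => F (y s) + B (u s)) volume 0 T ∧
    (∀ t ∈ Icc (0:ℝ) T, y t = y0 + ∫ s in (0:ℝ)..t, (F (y s) + B (u s))) ∧
    (∀ t ∈ Icc (0:ℝ) T, y t ∈ C) ∧ y 0 = y0 ∧ y T = y1}

/-- The minimal controllability time `T_C(y0, y1)` (with the convention `inf ∅ = ∞`). -/
noncomputable def minTime {n m : ℕ} (F : Euc n → Euc n) (B : Euc m →ₗ[ℝ] Euc n)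
    (C : Set (Euc n)) (y0 y1 : Euc n) : ℝ≥0∞ :=
  sInf (ENNReal.ofReal '' ctrlTimes F B C y0 y1)

/-- Times for the differential inclusion `ż(t) ∈ F_H((z(t) + H^⊥) ∩ C)` steering
`P_H y0` to `P_H y1`; `z` is absolutely continuous, encoded via its a.e. derivative `v`. -/
def slowTimes {n : ℕ} (F : Euc n → Euc n) (H : Submodule ℝ (Euc n))
    (C : Set (Euc n)) (y0 y1 : Euc n) : Set ℝ :=
  {T | 0 < T ∧ ∃ z v : ℝ → Euc n,
    IntervalIntegrable v volume 0 T ∧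
    (∀ t ∈ Icc (0:ℝ) T, z t = projS H y0 + ∫ s in (0:ℝ)..t, v s) ∧
    (∀ᵐ t ∂(volume.restrict (Icc (0:ℝ) T)),
      v t ∈ (fun x => projS H (F x)) '' (((fun w => z t + w) '' (Hᗮ : Set (Euc n))) ∩ C)) ∧
    z T = projS H y1}

/-- The auxiliary controllability time `T̄_C(y0, y1)` (with `inf ∅ = ∞`). -/
noncomputable def slowTime {n : ℕ} (F : Euc n → Euc n) (H : Submodule ℝ (Euc n))
    (C : Set (Euc n)) (y0 y1 : Euc n) : ℝ≥0∞ :=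
  sInf (ENNReal.ofReal '' slowTimes F H C y0 y1)

/-- Lemma 2 of the paper.  For the system `ẏ = F(y) + Bu` with
`F` Lipschitz, `B` an injective linear map `ℝ^m → ℝ^n` (`m < n`), an arbitrary
measurable constraint set `C`, and `H = (ran B)^⊥`: for all `y⁰, y¹` in the interior
of `C`, the auxiliary controllability time is a lower bound for the true minimal
controllability time: `T̄_C(y⁰, y¹) ≤ T_C(y⁰, y¹)`. -/
theorem slowTime_le_minTime {n m : ℕ} (hmn : m < n)
    (F : Euc n → Euc n) (L_F : ℝ) (hLF : 0 < L_F) (hF : LipschitzWith L_F.toNNReal F)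
    (B : Euc m →ₗ[ℝ] Euc n) (hB : Function.Injective B)
    (C : Set (Euc n)) (hC : MeasurableSet C)
    (y0 y1 : Euc n) (hy0 : y0 ∈ interior C) (hy1 : y1 ∈ interior C) :
    slowTime F (LinearMap.range B)ᗮ C y0 y1 ≤ minTime F B C y0 y1 := by
  set H : Submodule ℝ (Euc n) := (LinearMap.range B)ᗮ with hH
  apply sInf_le_sInf
  apply Set.image_mono
  rintro T ⟨hT, u, y, hu, hubd, hycont, hint, hyeq, hyC, hy00, hyT⟩
  set P : Euc n →L[ℝ] Euc n := H.subtypeL.comp (H.orthogonalProjection) with hP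
  have hPdef : ∀ x, P x = projS H x := fun x => rfl
  have hPB : ∀ w : Euc m, P (B w) = 0 := by
    intro w
    have hmem : B w ∈ Hᗮ := by
      have : (LinearMap.range B ≤ Hᗮ) := Submodule.le_orthogonal_orthogonal _
      exact this ⟨w, rfl⟩
    have := Submodule.orthogonalProjectionOnto_apply_of_mem_orthogonal hmem
    simp [hP, ContinuousLinearMap.comp_apply, this]
  refine ⟨hT, fun t => P (y t), fun t => P (F (y t) + B (u t)), ?_, ?_, ?_, ?_⟩
  · exact ⟨P.integrable_comp hint.1, P.integrable_comp hint.2⟩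
  · intro t ht
    have := hyeq t ht
    calc P (y t) = P (y0 + ∫ s in (0:ℝ)..t, (F (y s) + B (u s))) := by rw [← this]
      _ = P y0 + P (∫ s in (0:ℝ)..t, (F (y s) + B (u s))) := by rw [map_add]
      _ = projS H y0 + ∫ s in (0:ℝ)..t, P (F (y s) + B (u s)) := by
          rw [P.intervalIntegral_comp_comm (hint.mono_set
            (Set.uIcc_subset_uIcc Set.left_mem_uIcc
              (by rw [Set.uIcc_of_le hT.le]; exact ht)))]
          rfl
  · filter_upwards [ae_restrict_mem measurableSet_Icc] with t ht
    refine ⟨y t, ⟨⟨y t - P (y t), ?_, by simp⟩, hyC t ht⟩, ?_⟩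
    · exact Submodule.sub_starProjection_mem_orthogonal (K := H) (y t)
    · show projS H (F (y t)) = P (F (y t) + B (u t))
      rw [map_add, hPB, add_zero]; rfl
  · show P (y T) = projS H y1
    rw [hyT]; rfl
end
end

section
/- Suppose dim H = 1 (i.e. m = n−1), and let h₀ := P_H y⁰ and h₁ := P_H y¹ with h₀ ≠ h₁, where y⁰, y¹ ∈ C°. If s(h₂,h₀,h₁) ≤ 0 for some h₂ in the segment [h₀,h₁], then T_C(y⁰,y¹) = T̄_C(y⁰,y¹) = ∞; in particular y¹ is not reachable from y⁰ under the state constraint C. -/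
noncomputable section
open MeasureTheory Set RealInnerProductSpace
open scoped ENNReal

/-- `s(h, h₀, h₁) = sup ⟨F_H((h + H^⊥) ∩ C), h₁ - h₀⟩ / |h₁ - h₀|`. -/
noncomputable def sFun {n : ℕ} (F : Euc n → Euc n) (H : Submodule ℝ (Euc n))
    (C : Set (Euc n)) (h h0 h1 : Euc n) : ℝ :=
  sSup ((fun x => ⟪projS H (F x), h1 - h0⟫) ''
      (((fun w => h + w) '' (Hᗮ : Set (Euc n))) ∩ C)) / ‖h1 - h0‖

/-- The line integral `∫_{h ∈ [h₀,h₁]} dh / s(h, h₀, h₁)`. -/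
noncomputable def lineIntS {n : ℕ} (F : Euc n → Euc n) (H : Submodule ℝ (Euc n))
    (C : Set (Euc n)) (h0 h1 : Euc n) : ℝ :=
  ∫ v in (0:ℝ)..‖h1 - h0‖, (sFun F H C (h0 + (v / ‖h1 - h0‖) • (h1 - h0)) h0 h1)⁻¹

/-- `C` has a `C¹` smooth boundary: near each boundary point, `C` coincides with the
sublevel set of a `C¹` defining function with nonvanishing derivative. -/
def HasC1Boundary {n : ℕ} (C : Set (Euc n)) : Prop :=
  ∀ x ∈ frontier C, ∃ f : Euc n → ℝ, ContDiffAt ℝ 1 f x ∧ fderiv ℝ f x ≠ 0 ∧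
    ∀ᶠ y in nhds x, (y ∈ C ↔ f y ≤ 0)

set_option maxHeartbeats 4000000

open intervalIntegral

/-- Integral Gronwall core: if `u t ≤ u a + ∫_a^t w` with `w ≤ K u` a.e. and `u a ≤ 0`,
then `u ≤ 0` on `[a,b]`. -/
lemma gron_core {a b K : ℝ} (hab : a < b) (hK : 0 < K) {u w : ℝ → ℝ}
    (huc : ContinuousOn u (Icc a b))
    (hw : IntervalIntegrable w volume a b)
    (hrep : ∀ t ∈ Icc a b, u t = u a + ∫ s in a..t, w s)
    (hub : ∀ᵐ s ∂(volume.restrict (Icc a b)), w s ≤ K * u s)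
    (hua : u a ≤ 0) :
    ∀ t ∈ Icc a b, u t ≤ 0 := by
  have huint : ∀ t ∈ Icc a b, IntervalIntegrable u volume a t := by
    intro t ht
    exact (huc.mono (Icc_subset_Icc le_rfl ht.2)).intervalIntegrable_of_Icc ht.1
  set G : ℝ → ℝ := fun t => ∫ s in a..t, u s with hGdef
  have key : ∀ t ∈ Icc a b, u t ≤ K * G t := by
    intro t ht
    have h1 : IntervalIntegrable w volume a t := by
      refine hw.mono_set ?_
      rw [uIcc_of_le ht.1, uIcc_of_le hab.le]
      exact Icc_subset_Icc le_rfl ht.2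
    have h2 : IntervalIntegrable (fun s => K * u s) volume a t :=
      (huint t ht).const_mul K
    have hae : w ≤ᵐ[volume.restrict (Icc a t)] fun s => K * u s :=
      ae_restrict_of_ae_restrict_of_subset (Icc_subset_Icc le_rfl ht.2) hub
    have hmono := integral_mono_ae_restrict ht.1 h1 h2 hae
    have := hrep t ht
    rw [this]
    have : (∫ s in a..t, K * u s) = K * G t := integral_const_mul K u
    calc u a + ∫ s in a..t, w s ≤ 0 + ∫ s in a..t, K * u s := add_le_add hua hmono
      _ = K * G t := by rw [zero_add, this]
  have hGcont : ContinuousOn G (Icc a b) := by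
    have h := continuousOn_primitive_interval (a := a) (b := b) (μ := volume) (f := u)
      (by rw [uIcc_of_le hab.le]; exact (huc.mono le_rfl).integrableOn_compact isCompact_Icc)
    rwa [uIcc_of_le hab.le] at h
  have hGderiv : ∀ t ∈ Ioo a b, HasDerivAt G (u t) t := by
    intro t ht
    have hct : ContinuousAt u t := huc.continuousAt (Icc_mem_nhds ht.1 ht.2)
    have hmeas : StronglyMeasurableAtFilter u (nhds t) volume := by
      refine ContinuousAt.stronglyMeasurableAtFilter isOpen_Ioo ?_ t ht
      intro x hx; exact huc.continuousAt (Icc_mem_nhds hx.1 hx.2)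
    exact integral_hasDerivAt_right (huint t ⟨ht.1.le, ht.2.le⟩) hmeas hct
  set ψ : ℝ → ℝ := fun t => Real.exp (-K * t) * G t with hψdef
  have hψderiv : ∀ t ∈ Ioo a b,
      HasDerivAt ψ (Real.exp (-K * t) * (-K) * G t + Real.exp (-K * t) * u t) t := by
    intro t ht
    have h1 : HasDerivAt (fun s => Real.exp (-K * s)) (Real.exp (-K * t) * (-K)) t := by
      have := ((hasDerivAt_id t).const_mul (-K)).exp
      simpa [mul_comm] using this
    exact h1.mul (hGderiv t ht)
  have hψanti : AntitoneOn ψ (Icc a b) := by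
    refine antitoneOn_of_deriv_nonpos (convex_Icc a b) ?_ ?_ ?_
    · exact ((Real.continuous_exp.comp (continuous_const.mul continuous_id)).continuousOn).mul hGcont
    · intro t ht
      rw [interior_Icc] at ht
      exact ((hψderiv t ht).differentiableAt).differentiableWithinAt
    · intro t ht
      rw [interior_Icc] at ht
      rw [(hψderiv t ht).deriv]
      have h1 : u t ≤ K * G t := key t ⟨ht.1.le, ht.2.le⟩
      have h2 : (0:ℝ) < Real.exp (-K * t) := Real.exp_pos _
      nlinarith
  intro t ht
  have hψt : ψ t ≤ ψ a := hψanti (left_mem_Icc.2 hab.le) ht ht.1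
  have hψa : ψ a = 0 := by simp [hψdef, hGdef]
  have hGt : G t ≤ 0 := by
    have h2 : (0:ℝ) < Real.exp (-K * t) := Real.exp_pos _
    rw [hψa] at hψt
    simp only [hψdef] at hψt
    nlinarith [hψt]
  have := key t ht
  nlinarith


/-- Reversed Gronwall core: if `v t = v b + ∫_t^b w` with `w ≤ K v` a.e. and `v b ≤ 0`,
then `v ≤ 0` on `[a,b]`. -/
lemma gron_core_rev {a b K : ℝ} (hab : a < b) (hK : 0 < K) {v w : ℝ → ℝ}
    (hvc : ContinuousOn v (Icc a b))
    (hw : IntervalIntegrable w volume a b)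
    (hrep : ∀ t ∈ Icc a b, v t = v b + ∫ s in t..b, w s)
    (hub : ∀ᵐ s ∂(volume.restrict (Icc a b)), w s ≤ K * v s)
    (hvb : v b ≤ 0) :
    ∀ t ∈ Icc a b, v t ≤ 0 := by
  have hvint : ∀ t ∈ Icc a b, IntervalIntegrable v volume t b := by
    intro t ht
    exact (hvc.mono (Icc_subset_Icc ht.1 le_rfl)).intervalIntegrable_of_Icc ht.2
  set G : ℝ → ℝ := fun t => ∫ s in t..b, v s with hGdef
  have key : ∀ t ∈ Icc a b, v t ≤ K * G t := by
    intro t ht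
    have h1 : IntervalIntegrable w volume t b := by
      refine hw.mono_set ?_
      rw [uIcc_of_le ht.2, uIcc_of_le hab.le]
      exact Icc_subset_Icc ht.1 le_rfl
    have h2 : IntervalIntegrable (fun s => K * v s) volume t b :=
      (hvint t ht).const_mul K
    have hae : w ≤ᵐ[volume.restrict (Icc t b)] fun s => K * v s :=
      ae_restrict_of_ae_restrict_of_subset (Icc_subset_Icc ht.1 le_rfl) hub
    have hmono := integral_mono_ae_restrict ht.2 h1 h2 hae
    have hrw : (∫ s in t..b, K * v s) = K * G t := integral_const_mul K v
    rw [hrep t ht]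
    calc v b + ∫ s in t..b, w s ≤ 0 + ∫ s in t..b, K * v s := add_le_add hvb hmono
      _ = K * G t := by rw [zero_add, hrw]
  have hGcont : ContinuousOn G (Icc a b) := by
    have h := continuousOn_primitive_interval_left (a := a) (b := b) (μ := volume) (f := v)
      (by rw [uIcc_of_le hab.le]; exact (hvc.mono le_rfl).integrableOn_compact isCompact_Icc)
    rwa [uIcc_of_le hab.le] at h
  have hGderiv : ∀ t ∈ Ioo a b, HasDerivAt G (-(v t)) t := by
    intro t ht
    have hct : ContinuousAt v t := hvc.continuousAt (Icc_mem_nhds ht.1 ht.2)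
    have hmeas : StronglyMeasurableAtFilter v (nhds t) volume := by
      refine ContinuousAt.stronglyMeasurableAtFilter isOpen_Ioo ?_ t ht
      intro x hx; exact hvc.continuousAt (Icc_mem_nhds hx.1 hx.2)
    have := integral_hasDerivAt_left (hvint t ⟨ht.1.le, ht.2.le⟩) hmeas hct
    simpa using this
  set ψ : ℝ → ℝ := fun t => Real.exp (K * t) * G t with hψdef
  have hψderiv : ∀ t ∈ Ioo a b,
      HasDerivAt ψ (Real.exp (K * t) * K * G t + Real.exp (K * t) * (-(v t))) t := by
    intro t ht
    have h1 : HasDerivAt (fun s => Real.exp (K * s)) (Real.exp (K * t) * K) t := by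
      have := ((hasDerivAt_id t).const_mul K).exp
      simpa [mul_comm] using this
    exact h1.mul (hGderiv t ht)
  have hψmono : MonotoneOn ψ (Icc a b) := by
    refine monotoneOn_of_deriv_nonneg (convex_Icc a b) ?_ ?_ ?_
    · exact ((Real.continuous_exp.comp (continuous_const.mul continuous_id)).continuousOn).mul hGcont
    · intro t ht
      rw [interior_Icc] at ht
      exact ((hψderiv t ht).differentiableAt).differentiableWithinAt
    · intro t ht
      rw [interior_Icc] at ht
      rw [(hψderiv t ht).deriv]
      have h1 : v t ≤ K * G t := key t ⟨ht.1.le, ht.2.le⟩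
      have h2 : (0:ℝ) < Real.exp (K * t) := Real.exp_pos _
      nlinarith
  intro t ht
  have hψt : ψ t ≤ ψ b := hψmono ht (right_mem_Icc.2 hab.le) ht.2
  have hψb : ψ b = 0 := by simp [hψdef, hGdef]
  have hGt : G t ≤ 0 := by
    have h2 : (0:ℝ) < Real.exp (K * t) := Real.exp_pos _
    rw [hψb] at hψt
    simp only [hψdef] at hψt
    nlinarith [hψt]
  have := key t ht
  nlinarith

/-- Main Gronwall-type comparison: an absolutely continuous `g` with
`g' ≤ K |g|` a.e. and `g 0 ≤ 0` stays nonpositive, strictly if `g 0 < 0`. -/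
lemma gronwall_main {T K : ℝ} (hT : 0 < T) (hK : 0 < K) {g w : ℝ → ℝ}
    (hgc : ContinuousOn g (Icc 0 T))
    (hw : IntervalIntegrable w volume 0 T)
    (hrep : ∀ t ∈ Icc (0:ℝ) T, g t = g 0 + ∫ s in (0:ℝ)..t, w s)
    (hb : ∀ᵐ t ∂(volume.restrict (Icc (0:ℝ) T)), w t ≤ K * |g t|)
    (hg0 : g 0 ≤ 0) :
    g T ≤ 0 ∧ (g 0 < 0 → g T < 0) := by
  have hTmem : T ∈ Icc (0:ℝ) T := right_mem_Icc.2 hT.le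
  have h0mem : (0:ℝ) ∈ Icc (0:ℝ) T := left_mem_Icc.2 hT.le
  -- Part 1 : g T ≤ 0
  have part1 : g T ≤ 0 := by
    by_contra hpos
    push_neg at hpos
    set S : Set ℝ := {t ∈ Icc (0:ℝ) T | g t ≤ 0} with hSdef
    have hScl : IsClosed S := by
      have : S = Icc (0:ℝ) T ∩ g ⁻¹' (Iic 0) := rfl
      rw [this]
      exact ContinuousOn.preimage_isClosed_of_isClosed hgc isClosed_Icc isClosed_Iic
    have hScp : IsCompact S := isCompact_Icc.of_isClosed_subset hScl (sep_subset _ _)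
    have hSne : S.Nonempty := ⟨0, h0mem, hg0⟩
    set t0 := sSup S with ht0def
    have ht0S : t0 ∈ S := hScp.sSup_mem hSne
    have ht0Icc : t0 ∈ Icc (0:ℝ) T := ht0S.1
    have ht0T : t0 < T := lt_of_le_of_ne ht0Icc.2 (by
      intro h; rw [h] at ht0S; exact absurd ht0S.2 (not_le.2 hpos))
    have hposIoc : ∀ s ∈ Ioc t0 T, 0 < g s := by
      intro s hs
      by_contra hns
      push_neg at hns
      have : s ∈ S := ⟨⟨ht0Icc.1.trans hs.1.le, hs.2⟩, hns⟩
      exact absurd (le_csSup hScp.bddAbove this) (not_le.2 hs.1)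
    -- apply the core on [t0, T]
    have hsub : Icc t0 T ⊆ Icc (0:ℝ) T := Icc_subset_Icc ht0Icc.1 le_rfl
    have hwsub : IntervalIntegrable w volume t0 T := by
      refine hw.mono_set ?_
      rw [uIcc_of_le ht0T.le, uIcc_of_le hT.le]; exact hsub
    have hrep' : ∀ t ∈ Icc t0 T, g t = g t0 + ∫ s in t0..t, w s := by
      intro t ht
      have h1 : IntervalIntegrable w volume 0 t0 := by
        refine hw.mono_set ?_
        rw [uIcc_of_le ht0Icc.1, uIcc_of_le hT.le]; exact Icc_subset_Icc le_rfl ht0Icc.2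
      have h2 : IntervalIntegrable w volume t0 t := by
        refine hw.mono_set ?_
        rw [uIcc_of_le ht.1, uIcc_of_le hT.le]; exact Icc_subset_Icc ht0Icc.1 ht.2
      have hadj := integral_add_adjacent_intervals h1 h2
      rw [hrep t ⟨ht0Icc.1.trans ht.1, ht.2⟩, hrep t0 ht0Icc, ← hadj]
      ring
    have hub' : ∀ᵐ s ∂(volume.restrict (Icc t0 T)), w s ≤ K * g s := by
      have h1 : ∀ᵐ s ∂(volume.restrict (Icc t0 T)), w s ≤ K * |g s| :=
        ae_restrict_of_ae_restrict_of_subset hsub hb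
      have h2 : ∀ᵐ s ∂(volume.restrict (Icc t0 T)), s ∈ Icc t0 T :=
        ae_restrict_mem measurableSet_Icc
      have h3 : ∀ᵐ s ∂(volume.restrict (Icc t0 T)), s ≠ t0 := by
        refine ae_restrict_of_ae ?_
        have : volume ({t0} : Set ℝ) = 0 := measure_singleton t0
        rw [ae_iff]
        convert this using 2
        ext x; simp
      filter_upwards [h1, h2, h3] with s hs1 hs2 hs3
      have : 0 < g s := hposIoc s ⟨lt_of_le_of_ne hs2.1 (Ne.symm hs3), hs2.2⟩
      rwa [abs_of_pos this] at hs1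
    have := gron_core ht0T hK (hgc.mono hsub) hwsub hrep' hub' ht0S.2 T
      (right_mem_Icc.2 ht0T.le)
    exact absurd this (not_le.2 hpos)
  refine ⟨part1, fun hg0' => ?_⟩
  -- Part 2 : strict
  by_contra hTge
  push_neg at hTge
  have hgT0 : g T = 0 := le_antisymm part1 hTge
  set S : Set ℝ := {t ∈ Icc (0:ℝ) T | 0 ≤ g t} with hSdef
  have hScl : IsClosed S := by
    have : S = Icc (0:ℝ) T ∩ g ⁻¹' (Ici 0) := rfl
    rw [this]
    exact ContinuousOn.preimage_isClosed_of_isClosed hgc isClosed_Icc isClosed_Ici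
  have hScp : IsCompact S := isCompact_Icc.of_isClosed_subset hScl (sep_subset _ _)
  have hSne : S.Nonempty := ⟨T, hTmem, hTge⟩
  set t1 := sInf S with ht1def
  have ht1S : t1 ∈ S := hScp.sInf_mem hSne
  have ht1Icc : t1 ∈ Icc (0:ℝ) T := ht1S.1
  have ht1pos : 0 < t1 := lt_of_le_of_ne ht1Icc.1 (by
    intro h; rw [← h] at ht1S; exact absurd ht1S.2 (not_le.2 hg0'))
  have hnegIco : ∀ s ∈ Ico 0 t1, g s < 0 := by
    intro s hs
    by_contra hns
    push_neg at hns
    have : s ∈ S := ⟨⟨hs.1, hs.2.le.trans ht1Icc.2⟩, hns⟩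
    exact absurd (csInf_le hScp.bddBelow this) (not_le.2 hs.2)
  have hsub : Icc (0:ℝ) t1 ⊆ Icc (0:ℝ) T := Icc_subset_Icc le_rfl ht1Icc.2
  have hwsub : IntervalIntegrable w volume 0 t1 := by
    refine hw.mono_set ?_
    rw [uIcc_of_le ht1pos.le, uIcc_of_le hT.le]; exact hsub
  have hrep' : ∀ t ∈ Icc (0:ℝ) t1, (fun s => -g s) t = -g t1 + ∫ s in t..t1, w s := by
    intro t ht
    have h1 : IntervalIntegrable w volume 0 t := by
      refine hw.mono_set ?_
      rw [uIcc_of_le ht.1, uIcc_of_le hT.le]; exact Icc_subset_Icc le_rfl (ht.2.trans ht1Icc.2)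
    have h2 : IntervalIntegrable w volume t t1 := by
      refine hw.mono_set ?_
      rw [uIcc_of_le ht.2, uIcc_of_le hT.le]; exact Icc_subset_Icc ht.1 ht1Icc.2
    have hadj := integral_add_adjacent_intervals h1 h2
    have e1 := hrep t (hsub ht)
    have e2 := hrep t1 ht1Icc
    simp only
    rw [e1, e2, ← hadj]
    ring
  have hub' : ∀ᵐ s ∂(volume.restrict (Icc (0:ℝ) t1)), w s ≤ K * (fun s => -g s) s := by
    have h1 : ∀ᵐ s ∂(volume.restrict (Icc (0:ℝ) t1)), w s ≤ K * |g s| :=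
      ae_restrict_of_ae_restrict_of_subset hsub hb
    have h2 : ∀ᵐ s ∂(volume.restrict (Icc (0:ℝ) t1)), s ∈ Icc (0:ℝ) t1 :=
      ae_restrict_mem measurableSet_Icc
    have h3 : ∀ᵐ s ∂(volume.restrict (Icc (0:ℝ) t1)), s ≠ t1 := by
      refine ae_restrict_of_ae ?_
      have : volume ({t1} : Set ℝ) = 0 := measure_singleton t1
      rw [ae_iff]
      convert this using 2
      ext x; simp
    filter_upwards [h1, h2, h3] with s hs1 hs2 hs3
    have : g s < 0 := hnegIco s ⟨hs2.1, lt_of_le_of_ne hs2.2 hs3⟩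
    rwa [abs_of_neg this] at hs1
  have hcont' : ContinuousOn (fun s => -g s) (Icc (0:ℝ) t1) := (hgc.mono hsub).neg
  have hvb : (fun s => -g s) t1 ≤ 0 := by simpa using ht1S.2
  have := gron_core_rev ht1pos hK hcont' hwsub hrep' hub' hvb 0 (left_mem_Icc.2 ht1pos.le)
  linarith

lemma velocity_bound {n : ℕ} {F : Euc n → Euc n} {L R εm : ℝ} (hL : 0 < L)
    (hF : LipschitzWith L.toNNReal F) {C : Set (Euc n)} (hconv : Convex ℝ C)
    {e h2 : Euc n} (he1 : ‖e‖ = 1)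
    (hslice : ∀ x ∈ C, ⟪x - h2, e⟫ = 0 → ⟪F x, e⟫ ≤ 0)
    (hdiam : ∀ x ∈ C, ∀ z ∈ C, ‖x - z‖ ≤ R)
    {p q : Euc n} (hp : p ∈ C) (hq : q ∈ C) (hεm : 0 < εm)
    (hpv : ⟪p - h2, e⟫ ≤ -εm) (hqv : εm ≤ ⟪q - h2, e⟫) :
    ∀ x ∈ C, ⟪F x, e⟫ ≤ (L * R / εm + 1) * |⟪x - h2, e⟫| := by
  intro x hx
  have hR0 : 0 ≤ R := by simpa using hdiam x hx x hx
  have hLcoe : (L.toNNReal : ℝ) = L := Real.coe_toNNReal L hL.le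
  set δ := ⟪x - h2, e⟫ with hδdef
  -- generic convex-combination estimate
  have main : ∀ z ∈ C, ∀ lam : ℝ, 0 ≤ lam → lam ≤ 1 →
      (1 - lam) * δ + lam * ⟪z - h2, e⟫ = 0 →
      ⟪F x, e⟫ ≤ L * (lam * R) := by
    intro z hz lam hlam0 hlam1 hzero
    set x' := (1 - lam) • x + lam • z with hx'def
    have hx'C : x' ∈ C := hconv hx hz (by linarith) hlam0 (by ring)
    have hx'v : ⟪x' - h2, e⟫ = 0 := by
      have hdecomp : x' - h2 = (1 - lam) • (x - h2) + lam • (z - h2) := by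
        rw [hx'def]; module
      rw [hdecomp, inner_add_left, real_inner_smul_left, real_inner_smul_left]
      exact hzero
    have hFx' : ⟪F x', e⟫ ≤ 0 := hslice x' hx'C hx'v
    have hdiff : ⟪F x - F x', e⟫ ≤ L * (lam * R) := by
      have h1 : ⟪F x - F x', e⟫ ≤ ‖F x - F x'‖ * ‖e‖ := real_inner_le_norm _ _
      have h2' : ‖F x - F x'‖ ≤ L * ‖x - x'‖ := by
        have := hF.dist_le_mul x x'
        rwa [dist_eq_norm, dist_eq_norm, hLcoe] at this
      have h3 : x - x' = lam • (x - z) := by rw [hx'def]; module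
      have h4 : ‖x - x'‖ = lam * ‖x - z‖ := by
        rw [h3, norm_smul, Real.norm_eq_abs, abs_of_nonneg hlam0]
      have h5 : ‖x - z‖ ≤ R := hdiam x hx z hz
      have h6 : ‖F x - F x'‖ ≤ L * (lam * R) := by
        refine h2'.trans ?_
        rw [h4]
        have : lam * ‖x - z‖ ≤ lam * R := by nlinarith
        nlinarith
      calc ⟪F x - F x', e⟫ ≤ ‖F x - F x'‖ * ‖e‖ := h1
        _ = ‖F x - F x'‖ := by rw [he1, mul_one]
        _ ≤ L * (lam * R) := h6
    have : ⟪F x, e⟫ = ⟪F x', e⟫ + ⟪F x - F x', e⟫ := by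
      rw [← inner_add_left]; congr 1; abel
    linarith
  rcases lt_trichotomy δ 0 with hneg | hzero | hpos
  · -- δ < 0 : use q
    set γ := ⟪q - h2, e⟫ with hγdef
    have hγδ : 0 < γ - δ := by linarith
    set lam := -δ / (γ - δ) with hlamdef
    have hlam0 : 0 ≤ lam := div_nonneg (by linarith) hγδ.le
    have hlam1 : lam ≤ 1 := by rw [div_le_one hγδ]; linarith
    have hlg : lam * (γ - δ) = -δ := by rw [hlamdef]; exact div_mul_cancel₀ (-δ) hγδ.ne'
    have hz : (1 - lam) * δ + lam * γ = 0 := by linear_combination hlg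
    have hmain := main q hq lam hlam0 hlam1 hz
    have hlamle : lam ≤ -δ / εm := by
      rw [hlamdef, div_le_div_iff₀ hγδ hεm]
      nlinarith
    have habs : |δ| = -δ := abs_of_neg hneg
    rw [habs]
    have hKnn : 0 ≤ L * R := by positivity
    have e1 : L * (lam * R) = (L * R) * lam := by ring
    have e2 : (L * R) * lam ≤ (L * R) * (-δ / εm) := mul_le_mul_of_nonneg_left hlamle hKnn
    have e3 : (L * R) * (-δ / εm) = (L * R / εm) * (-δ) := by ring
    have e4 : (L * R / εm) * (-δ) ≤ (L * R / εm + 1) * (-δ) := by nlinarith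
    linarith
  · rw [hzero]; simpa using hslice x hx hzero
  · -- δ > 0 : use p
    set γ := ⟪p - h2, e⟫ with hγdef
    have hγδ : 0 < δ - γ := by linarith
    set lam := δ / (δ - γ) with hlamdef
    have hlam0 : 0 ≤ lam := div_nonneg hpos.le hγδ.le
    have hlam1 : lam ≤ 1 := by rw [div_le_one hγδ]; linarith
    have hlg : lam * (δ - γ) = δ := by rw [hlamdef]; exact div_mul_cancel₀ δ hγδ.ne'
    have hz : (1 - lam) * δ + lam * γ = 0 := by linear_combination -hlg
    have hmain := main p hp lam hlam0 hlam1 hz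
    have hlamle : lam ≤ δ / εm := by
      rw [hlamdef, div_le_div_iff₀ hγδ hεm]
      nlinarith
    have habs : |δ| = δ := abs_of_pos hpos
    rw [habs]
    have hKnn : 0 ≤ L * R := by positivity
    have e1 : L * (lam * R) = (L * R) * lam := by ring
    have e2 : (L * R) * lam ≤ (L * R) * (δ / εm) := mul_le_mul_of_nonneg_left hlamle hKnn
    have e3 : (L * R) * (δ / εm) = (L * R / εm) * δ := by ring
    have e4 : (L * R / εm) * δ ≤ (L * R / εm + 1) * δ := by nlinarith
    linarith

lemma IntervalIntegrable.clm_comp {E F' : Type*} [NormedAddCommGroup E] [NormedSpace ℝ E]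
    [NormedAddCommGroup F'] [NormedSpace ℝ F'] {f : ℝ → E} {a b : ℝ}
    (L : E →L[ℝ] F') (h : IntervalIntegrable f volume a b) :
    IntervalIntegrable (fun x => L (f x)) volume a b := by
  rw [intervalIntegrable_iff] at h ⊢
  exact L.integrable_comp h

/-- Theorem 1 (ii) of the paper.  Let `dim H = 1` (i.e. `m = n - 1`),
`C` a bounded convex set with `C¹` smooth boundary, `F` Lipschitz, `y⁰, y¹ ∈ C°`, and
`h₀ = P_H y⁰ ≠ h₁ = P_H y¹`.  If `s(h₂, h₀, h₁) ≤ 0` for some `h₂` in the segment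
`[h₀, h₁]`, then `T_C(y⁰,y¹) = T̄_C(y⁰,y¹) = ∞`; in particular `y¹` is not reachable
from `y⁰` under the state constraint `C`. -/
theorem minTime_eq_top_of_sFun_nonpos {n m : ℕ} (hnm : n = m + 1)
    (F : Euc n → Euc n) (L_F : ℝ) (hLF : 0 < L_F) (hF : LipschitzWith L_F.toNNReal F)
    (B : Euc m →ₗ[ℝ] Euc n) (hB : Function.Injective B)
    (C : Set (Euc n)) (hconv : Convex ℝ C) (hbdd : Bornology.IsBounded C)
    (hbdry : HasC1Boundary C)
    (y0 y1 : Euc n) (hy0 : y0 ∈ interior C) (hy1 : y1 ∈ interior C)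
    (h0 h1 : Euc n) (hh0 : h0 = projS (LinearMap.range B)ᗮ y0)
    (hh1 : h1 = projS (LinearMap.range B)ᗮ y1) (hne : h0 ≠ h1)
    (h2 : Euc n) (hh2 : h2 ∈ segment ℝ h0 h1)
    (hs : sFun F (LinearMap.range B)ᗮ C h2 h0 h1 ≤ 0) :
    minTime F B C y0 y1 = ⊤ ∧ slowTime F (LinearMap.range B)ᗮ C y0 y1 = ⊤ := by

  set H := (LinearMap.range B)ᗮ with hHdef
  have hC_y0 : y0 ∈ C := interior_subset hy0
  have hC_y1 : y1 ∈ C := interior_subset hy1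
  have hsub_ne : h1 - h0 ≠ 0 := sub_ne_zero.2 (Ne.symm hne)
  have hnorm : 0 < ‖h1 - h0‖ := norm_pos_iff.2 hsub_ne
  set e : Euc n := ‖h1 - h0‖⁻¹ • (h1 - h0) with hedef
  have he1 : ‖e‖ = 1 := by
    rw [hedef, norm_smul, Real.norm_eq_abs, abs_of_pos (inv_pos.2 hnorm)]
    field_simp
  have heNe : e ≠ 0 := by
    intro h; rw [h, norm_zero] at he1; norm_num at he1
  have h0H : h0 ∈ H := by rw [hh0]; exact SetLike.coe_mem (H.orthogonalProjection y0)
  have h1H : h1 ∈ H := by rw [hh1]; exact SetLike.coe_mem (H.orthogonalProjection y1)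
  have heH : e ∈ H := H.smul_mem _ (H.sub_mem h1H h0H)
  -- dimension of H is 1
  have hfr : Module.finrank ℝ H = 1 := by
    rw [hHdef]
    have ha := Submodule.finrank_add_finrank_orthogonal (K := LinearMap.range B)
    have hb2 : Module.finrank ℝ (LinearMap.range B) = m := by
      rw [LinearMap.finrank_range_of_inj hB, finrank_euclideanSpace_fin]
    have hc : Module.finrank ℝ (EuclideanSpace ℝ (Fin n)) = n := finrank_euclideanSpace_fin
    rw [hb2, hc] at ha
    omega
  have hspan : (Submodule.span ℝ {e} : Submodule ℝ (Euc n)) = H := by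
    apply Submodule.eq_of_le_of_finrank_eq
    · rw [Submodule.span_le, Set.singleton_subset_iff]; exact heH
    · rw [finrank_span_singleton heNe, hfr]
  -- inner product computations
  have hproj_inner : ∀ v : Euc n, ∀ u ∈ H, ⟪projS H v, u⟫ = ⟪v, u⟫ := by
    intro v u hu
    have hmem : v - (H.orthogonalProjection v : Euc n) ∈ Hᗮ := Submodule.sub_starProjection_mem_orthogonal (K := H) v
    have h0' : ⟪v - projS H v, u⟫ = 0 := (Submodule.mem_orthogonal' H _).1 hmem u hu
    rw [inner_sub_left] at h0'
    linarith
  have hinner_e : ⟪h1 - h0, e⟫ = ‖h1 - h0‖ := by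
    rw [hedef, real_inner_smul_right, real_inner_self_eq_norm_mul_norm]
    field_simp
  have hee : ⟪e, e⟫ = 1 := by
    rw [real_inner_self_eq_norm_mul_norm, he1]; norm_num
  obtain ⟨aθ, bθ, haθ, hbθ, habθ, hh2eq⟩ := hh2
  have hh1h2 : h1 - h2 = aθ • (h1 - h0) := by
    have hab' : bθ = 1 - aθ := by linarith
    rw [← hh2eq, hab']; module
  have hh0h2 : h0 - h2 = -(bθ • (h1 - h0)) := by
    have hab' : aθ = 1 - bθ := by linarith
    rw [← hh2eq, hab']; module
  have hgap1 : ⟪h1 - h2, e⟫ = aθ * ‖h1 - h0‖ := by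
    rw [hh1h2, real_inner_smul_left, hinner_e]
  have hgap0 : ⟪h0 - h2, e⟫ = -(bθ * ‖h1 - h0‖) := by
    rw [hh0h2, inner_neg_left, real_inner_smul_left, hinner_e]
  have heB : ∀ vm : Euc m, ⟪B vm, e⟫ = 0 := by
    intro vm
    exact (Submodule.mem_orthogonal (LinearMap.range B) e).1 heH (B vm) ⟨vm, rfl⟩
  have heBot : ∀ v ∈ Hᗮ, ⟪v, e⟫ = 0 := by
    intro v hv
    exact (Submodule.mem_orthogonal' H v).1 hv e heH
  have hy0e : ⟪y0, e⟫ = ⟪h0, e⟫ := by rw [hh0]; exact (hproj_inner y0 e heH).symm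
  have hy1e : ⟪y1, e⟫ = ⟪h1, e⟫ := by rw [hh1]; exact (hproj_inner y1 e heH).symm
  -- the slice condition
  have hslice : ∀ x ∈ C, ⟪x - h2, e⟫ = 0 → ⟪F x, e⟫ ≤ 0 := by
    intro x hx hxe
    have hxbot : x - h2 ∈ Hᗮ := by
      rw [Submodule.mem_orthogonal]
      intro u hu
      rw [← hspan, Submodule.mem_span_singleton] at hu
      obtain ⟨c, rfl⟩ := hu
      rw [real_inner_smul_left, real_inner_comm, hxe, mul_zero]
    have hxslice : x ∈ ((fun w => h2 + w) '' (Hᗮ : Set (Euc n))) ∩ C :=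
      ⟨⟨x - h2, hxbot, by module⟩, hx⟩
    obtain ⟨R, hR⟩ := hbdd.subset_closedBall 0
    have hbdd_img : BddAbove ((fun x => ⟪projS H (F x), h1 - h0⟫) ''
        (((fun w => h2 + w) '' (Hᗮ : Set (Euc n))) ∩ C)) := by
      refine ⟨(‖F 0‖ + L_F * R) * ‖h1 - h0‖, ?_⟩
      rintro val ⟨z, hz, rfl⟩
      have hzC : z ∈ C := hz.2
      have hzR : ‖z‖ ≤ R := by
        have := hR hzC; rwa [Metric.mem_closedBall, dist_zero_right] at this
      have h1' : ⟪projS H (F z), h1 - h0⟫ ≤ ‖projS H (F z)‖ * ‖h1 - h0‖ :=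
        real_inner_le_norm _ _
      have h2' : ‖projS H (F z)‖ ≤ ‖F z‖ := by
        calc ‖projS H (F z)‖ = ‖H.orthogonalProjection (F z)‖ := rfl
          _ ≤ ‖H.orthogonalProjection‖ * ‖F z‖ := (H.orthogonalProjection).le_opNorm _
          _ ≤ 1 * ‖F z‖ := by
              have := Submodule.orthogonalProjectionOnto_norm_le H
              nlinarith [norm_nonneg (F z)]
          _ = ‖F z‖ := one_mul _
      have h3' : ‖F z‖ ≤ ‖F 0‖ + L_F * R := by
        have hd := hF.dist_le_mul z 0
        rw [dist_eq_norm, dist_eq_norm, sub_zero, Real.coe_toNNReal L_F hLF.le] at hd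
        have h4' : ‖F z‖ - ‖F 0‖ ≤ ‖F z - F 0‖ := norm_sub_norm_le _ _
        nlinarith
      calc ⟪projS H (F z), h1 - h0⟫ ≤ ‖projS H (F z)‖ * ‖h1 - h0‖ := h1'
        _ ≤ ‖F z‖ * ‖h1 - h0‖ := mul_le_mul_of_nonneg_right h2' hnorm.le
        _ ≤ (‖F 0‖ + L_F * R) * ‖h1 - h0‖ := mul_le_mul_of_nonneg_right h3' hnorm.le
    have hsup : sSup ((fun x => ⟪projS H (F x), h1 - h0⟫) ''
        (((fun w => h2 + w) '' (Hᗮ : Set (Euc n))) ∩ C)) ≤ 0 := by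
      rw [sFun] at hs
      rcases div_nonpos_iff.1 hs with ⟨_, hd⟩ | ⟨hnum, _⟩
      · linarith
      · exact hnum
    have hle : ⟪projS H (F x), h1 - h0⟫ ≤ 0 :=
      le_trans (le_csSup hbdd_img ⟨x, hxslice, rfl⟩) hsup
    have hpe : ⟪F x, h1 - h0⟫ ≤ 0 := by
      rwa [hproj_inner (F x) (h1 - h0) (H.sub_mem h1H h0H)] at hle
    rw [hedef, real_inner_smul_right]
    exact mul_nonpos_of_nonneg_of_nonpos (inv_nonneg.2 hnorm.le) hpe
  -- interior points shifted along ∓e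
  obtain ⟨r0, hr0pos, hball0⟩ := Metric.isOpen_iff.1 isOpen_interior y0 hy0
  obtain ⟨r1, hr1pos, hball1⟩ := Metric.isOpen_iff.1 isOpen_interior y1 hy1
  set p : Euc n := y0 - (r0/2) • e with hpdef
  set q : Euc n := y1 + (r1/2) • e with hqdef
  have hpC : p ∈ C := by
    apply interior_subset; apply hball0
    rw [Metric.mem_ball, dist_eq_norm, hpdef]
    have hsp : y0 - (r0/2) • e - y0 = -((r0/2) • e) := by module
    rw [hsp, norm_neg, norm_smul, Real.norm_eq_abs, he1, mul_one, abs_of_pos (by linarith)]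
    linarith
  have hqC : q ∈ C := by
    apply interior_subset; apply hball1
    rw [Metric.mem_ball, dist_eq_norm, hqdef]
    have hsp : y1 + (r1/2) • e - y1 = (r1/2) • e := by module
    rw [hsp, norm_smul, Real.norm_eq_abs, he1, mul_one, abs_of_pos (by linarith)]
    linarith
  have hpv : ⟪p - h2, e⟫ = ⟪h0 - h2, e⟫ - r0/2 := by
    have hsplit : p - h2 = (y0 - h2) - (r0/2) • e := by rw [hpdef]; module
    rw [hsplit, inner_sub_left, real_inner_smul_left, hee]
    have hy : ⟪y0 - h2, e⟫ = ⟪h0 - h2, e⟫ := by rw [inner_sub_left, inner_sub_left, hy0e]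
    rw [hy]; ring
  have hqv : ⟪q - h2, e⟫ = ⟪h1 - h2, e⟫ + r1/2 := by
    have hsplit : q - h2 = (y1 - h2) + (r1/2) • e := by rw [hqdef]; module
    rw [hsplit, inner_add_left, real_inner_smul_left, hee]
    have hy : ⟪y1 - h2, e⟫ = ⟪h1 - h2, e⟫ := by rw [inner_sub_left, inner_sub_left, hy1e]
    rw [hy]; ring
  set εm : ℝ := min (r0/2) (r1/2) with hεmdef
  have hεm : 0 < εm := lt_min (by linarith) (by linarith)
  have hpv' : ⟪p - h2, e⟫ ≤ -εm := by
    rw [hpv, hgap0]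
    have h1' : εm ≤ r0/2 := min_le_left _ _
    nlinarith [mul_nonneg hbθ hnorm.le]
  have hqv' : εm ≤ ⟪q - h2, e⟫ := by
    rw [hqv, hgap1]
    have h1' : εm ≤ r1/2 := min_le_right _ _
    nlinarith [mul_nonneg haθ hnorm.le]
  -- diameter bound
  obtain ⟨R, hRC⟩ := hbdd.subset_closedBall 0
  have hdiam : ∀ x ∈ C, ∀ z ∈ C, ‖x - z‖ ≤ R + R := by
    intro x hx z hz
    have hx' : ‖x‖ ≤ R := by
      have := hRC hx; rwa [Metric.mem_closedBall, dist_zero_right] at this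
    have hz' : ‖z‖ ≤ R := by
      have := hRC hz; rwa [Metric.mem_closedBall, dist_zero_right] at this
    calc ‖x - z‖ ≤ ‖x‖ + ‖z‖ := norm_sub_le _ _
      _ ≤ R + R := by linarith
  have hR0 : (0:ℝ) ≤ R := by
    have := hRC hC_y0; rw [Metric.mem_closedBall, dist_zero_right] at this
    linarith [norm_nonneg y0]
  set K : ℝ := L_F * (R + R) / εm + 1 with hKdef
  have hK : 0 < K := by
    have hnn : 0 ≤ L_F * (R + R) / εm := by positivity
    rw [hKdef]; linarith
  have hKbd : ∀ x ∈ C, ⟪F x, e⟫ ≤ K * |⟪x - h2, e⟫| :=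
    velocity_bound hLF hF hconv he1 hslice hdiam hpC hqC hεm hpv' hqv'
  -- the controlled system cannot reach y1
  have hctrl_empty : ctrlTimes F B C y0 y1 = ∅ := by
    rw [eq_empty_iff_forall_notMem]
    rintro T ⟨hTpos, u, y, hu_meas, hu_bdd, hy_cont, hint, hy_rep, hy_mem, hy_0, hy_T⟩
    set f : ℝ → Euc n := fun s => F (y s) + B (u s) with hfdef
    set g : ℝ → ℝ := fun t => ⟪y t - h2, e⟫ with hgdef
    set w : ℝ → ℝ := fun s => ⟪e, f s⟫ with hwdef
    have hw_int : IntervalIntegrable w volume 0 T := by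
      have h := IntervalIntegrable.clm_comp (innerSL ℝ e) hint
      simpa using h
    have hgc : ContinuousOn g (Icc 0 T) :=
      ContinuousOn.inner (hy_cont.sub continuousOn_const) continuousOn_const
    have hcomm : ∀ t ∈ Icc (0:ℝ) T, ⟪e, ∫ s in (0:ℝ)..t, f s⟫ = ∫ s in (0:ℝ)..t, w s := by
      intro t ht
      have hsubI : IntervalIntegrable f volume 0 t := by
        refine hint.mono_set ?_
        rw [uIcc_of_le ht.1, uIcc_of_le (ht.1.trans ht.2)]
        exact Icc_subset_Icc le_rfl ht.2
      have h := (innerSL ℝ e).intervalIntegral_comp_comm hsubI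
      calc ⟪e, ∫ s in (0:ℝ)..t, f s⟫ = (innerSL ℝ e) (∫ s in (0:ℝ)..t, f s) := by
            rw [innerSL_apply_apply]
        _ = ∫ s in (0:ℝ)..t, (innerSL ℝ e) (f s) := h.symm
        _ = ∫ s in (0:ℝ)..t, w s := by
            refine intervalIntegral.integral_congr fun s _ => ?_
            rw [innerSL_apply_apply]
    have hrepg : ∀ t ∈ Icc (0:ℝ) T, g t = g 0 + ∫ s in (0:ℝ)..t, w s := by
      intro t ht
      have h0' : g 0 = ⟪y0 - h2, e⟫ := by
        show ⟪y 0 - h2, e⟫ = _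
        rw [hy_0]
      have hgt : g t = ⟪y0 - h2, e⟫ + ⟪e, ∫ s in (0:ℝ)..t, f s⟫ := by
        show ⟪y t - h2, e⟫ = _
        rw [hy_rep t ht]
        have hsplit : y0 + (∫ s in (0:ℝ)..t, f s) - h2
            = (y0 - h2) + ∫ s in (0:ℝ)..t, f s := by module
        rw [hsplit, inner_add_left, real_inner_comm (∫ s in (0:ℝ)..t, f s) e]
      rw [hgt, hcomm t ht, h0']
    have hae : ∀ᵐ t ∂(volume.restrict (Icc (0:ℝ) T)), w t ≤ K * |g t| := by
      refine (ae_restrict_mem measurableSet_Icc).mono ?_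
      intro t ht
      have hBu : ⟪B (u t), e⟫ = 0 := heB (u t)
      have hFb : ⟪F (y t), e⟫ ≤ K * |⟪y t - h2, e⟫| := hKbd (y t) (hy_mem t ht)
      have hwt : w t = ⟪F (y t), e⟫ + ⟪B (u t), e⟫ := by
        show ⟪e, F (y t) + B (u t)⟫ = _
        rw [real_inner_comm, inner_add_left]
      have hgt : K * |⟪y t - h2, e⟫| = K * |g t| := rfl
      rw [hwt, hBu, add_zero, ← hgt]
      exact hFb
    have hg0v : g 0 = -(bθ * ‖h1 - h0‖) := by
      have h0' : g 0 = ⟪y0 - h2, e⟫ := by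
        show ⟪y 0 - h2, e⟫ = _
        rw [hy_0]
      rw [h0']
      have hy : ⟪y0 - h2, e⟫ = ⟪h0 - h2, e⟫ := by rw [inner_sub_left, inner_sub_left, hy0e]
      rw [hy, hgap0]
    have hgTv : g T = aθ * ‖h1 - h0‖ := by
      have hT' : g T = ⟪y1 - h2, e⟫ := by
        show ⟪y T - h2, e⟫ = _
        rw [hy_T]
      rw [hT']
      have hy : ⟪y1 - h2, e⟫ = ⟪h1 - h2, e⟫ := by rw [inner_sub_left, inner_sub_left, hy1e]
      rw [hy, hgap1]
    have hg0le : g 0 ≤ 0 := by rw [hg0v]; nlinarith [mul_nonneg hbθ hnorm.le]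
    obtain ⟨hpart1, hpart2⟩ := gronwall_main hTpos hK hgc hw_int hrepg hae hg0le
    rcases haθ.eq_or_lt with haz | hap
    · have hb1 : bθ = 1 := by linarith
      have hneg : g 0 < 0 := by rw [hg0v, hb1, one_mul]; linarith
      have hlt := hpart2 hneg
      rw [hgTv, ← haz, zero_mul] at hlt
      exact lt_irrefl 0 hlt
    · have hgt : 0 < g T := by rw [hgTv]; exact mul_pos hap hnorm
      linarith
  -- the averaged inclusion cannot reach either
  have hslow_empty : slowTimes F H C y0 y1 = ∅ := by
    rw [eq_empty_iff_forall_notMem]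
    rintro T ⟨hTpos, z, v, hv_int, hz_rep, hv_mem, hz_T⟩
    set z' : ℝ → Euc n := fun t => projS H y0 + ∫ s in (0:ℝ)..t, v s with hz'def
    set g : ℝ → ℝ := fun t => ⟪z' t - h2, e⟫ with hgdef
    set w : ℝ → ℝ := fun s => ⟪e, v s⟫ with hwdef
    have hw_int : IntervalIntegrable w volume 0 T := by
      have h := IntervalIntegrable.clm_comp (innerSL ℝ e) hv_int
      simpa using h
    have hprim : ContinuousOn (fun t => ∫ s in (0:ℝ)..t, v s) (Icc 0 T) := by
      have h := intervalIntegral.continuousOn_primitive_interval' hv_int left_mem_uIcc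
      rwa [uIcc_of_le hTpos.le] at h
    have hgc : ContinuousOn g (Icc 0 T) :=
      ContinuousOn.inner ((continuousOn_const.add hprim).sub continuousOn_const)
        continuousOn_const
    have hcomm : ∀ t ∈ Icc (0:ℝ) T, ⟪e, ∫ s in (0:ℝ)..t, v s⟫ = ∫ s in (0:ℝ)..t, w s := by
      intro t ht
      have hsubI : IntervalIntegrable v volume 0 t := by
        refine hv_int.mono_set ?_
        rw [uIcc_of_le ht.1, uIcc_of_le (ht.1.trans ht.2)]
        exact Icc_subset_Icc le_rfl ht.2
      have h := (innerSL ℝ e).intervalIntegral_comp_comm hsubI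
      calc ⟪e, ∫ s in (0:ℝ)..t, v s⟫ = (innerSL ℝ e) (∫ s in (0:ℝ)..t, v s) := by
            rw [innerSL_apply_apply]
        _ = ∫ s in (0:ℝ)..t, (innerSL ℝ e) (v s) := h.symm
        _ = ∫ s in (0:ℝ)..t, w s := by
            refine intervalIntegral.integral_congr fun s _ => ?_
            rw [innerSL_apply_apply]
    have hg0' : g 0 = ⟪projS H y0 - h2, e⟫ := by
      show ⟪z' 0 - h2, e⟫ = _
      rw [hz'def]
      simp
    have hrepg : ∀ t ∈ Icc (0:ℝ) T, g t = g 0 + ∫ s in (0:ℝ)..t, w s := by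
      intro t ht
      have hgt : g t = ⟪projS H y0 - h2, e⟫ + ⟪e, ∫ s in (0:ℝ)..t, v s⟫ := by
        show ⟪z' t - h2, e⟫ = _
        have hsplit : z' t - h2 = (projS H y0 - h2) + ∫ s in (0:ℝ)..t, v s := by
          rw [hz'def]; module
        rw [hsplit, inner_add_left, real_inner_comm (∫ s in (0:ℝ)..t, v s) e]
      rw [hgt, hcomm t ht, hg0']
    have hae : ∀ᵐ t ∂(volume.restrict (Icc (0:ℝ) T)), w t ≤ K * |g t| := by
      filter_upwards [hv_mem, ae_restrict_mem measurableSet_Icc] with t hvt htI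
      obtain ⟨x, ⟨⟨w2, hw2bot, hw2eq⟩, hxC⟩, hvx⟩ := hvt
      have hvte : w t = ⟪F x, e⟫ := by
        show ⟪e, v t⟫ = _
        rw [← hvx, real_inner_comm]
        exact hproj_inner (F x) e heH
      have hgte : ⟪x - h2, e⟫ = g t := by
        have hzz : z t = z' t := hz_rep t htI
        have hxe2 : x = z' t + w2 := by rw [← hw2eq, hzz]
        rw [hxe2]
        have hsplit : z' t + w2 - h2 = (z' t - h2) + w2 := by module
        rw [hsplit, inner_add_left, heBot w2 hw2bot, add_zero]
      rw [hvte, ← hgte]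
      exact hKbd x hxC
    have hg0v : g 0 = -(bθ * ‖h1 - h0‖) := by
      rw [hg0', ← hh0, hgap0]
    have hgTv : g T = aθ * ‖h1 - h0‖ := by
      have hzz : z T = z' T := hz_rep T (right_mem_Icc.2 hTpos.le)
      have hT' : g T = ⟪projS H y1 - h2, e⟫ := by
        show ⟪z' T - h2, e⟫ = _
        rw [← hzz, hz_T]
      rw [hT', ← hh1, hgap1]
    have hg0le : g 0 ≤ 0 := by rw [hg0v]; nlinarith [mul_nonneg hbθ hnorm.le]
    obtain ⟨hpart1, hpart2⟩ := gronwall_main hTpos hK hgc hw_int hrepg hae hg0le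
    rcases haθ.eq_or_lt with haz | hap
    · have hb1 : bθ = 1 := by linarith
      have hneg : g 0 < 0 := by rw [hg0v, hb1, one_mul]; linarith
      have hlt := hpart2 hneg
      rw [hgTv, ← haz, zero_mul] at hlt
      exact lt_irrefl 0 hlt
    · have hgt : 0 < g T := by rw [hgTv]; exact mul_pos hap hnorm
      linarith
  constructor
  · unfold minTime
    rw [hctrl_empty, image_empty, sInf_empty]
  · unfold slowTime
    rw [hslow_empty, image_empty, sInf_empty]
end
end

section
/- For all y⁰, y¹ in the interior C° of C, the minimal controllability time is bounded above by the pliable controllability time: T_C(y⁰,y¹) ≤ T̃_C(y⁰,y¹). -/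
noncomputable section
open MeasureTheory Set RealInnerProductSpace
open scoped ENNReal

/-- `b` is reachable from `a` under the state constraint `C` within time `τ`. -/
def ReachWithin {n m : ℕ} (F : Euc n → Euc n) (B : Euc m →ₗ[ℝ] Euc n)
    (C : Set (Euc n)) (a b : Euc n) (τ : ℝ) : Prop :=
  ∃ T ∈ ctrlTimes F B C a b, T ≤ τ

/-- A solution `(z, h⊥)` of the auxiliary system `ż(t) = F_H(z(t) + h⊥(t))`,
`z(t) + h⊥(t) ∈ C`, on `[0, T]`, steering `P_H y0` to `P_H y1`. -/
def HatSol {n : ℕ} (F : Euc n → Euc n) (H : Submodule ℝ (Euc n)) (C : Set (Euc n))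
    (y0 y1 : Euc n) (T : ℝ) (z hp : ℝ → Euc n) : Prop :=
  Measurable hp ∧ (∀ t, hp t ∈ Hᗮ) ∧
  IntervalIntegrable (fun s => projS H (F (z s + hp s))) volume 0 T ∧
  (∀ t ∈ Icc (0:ℝ) T, z t = projS H y0 + ∫ s in (0:ℝ)..t, projS H (F (z s + hp s))) ∧
  (∀ t ∈ Icc (0:ℝ) T, z t + hp t ∈ C) ∧
  z T = projS H y1

/-- Definition 1 of the paper: the solution `(z, hp)` on `[0, T]` with target `y1`
is *pliable*. -/
def Pliable {n m : ℕ} (F : Euc n → Euc n) (B : Euc m →ₗ[ℝ] Euc n) (C : Set (Euc n))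
    (y1 : Euc n) (T : ℝ) (z hp : ℝ → Euc n) : Prop :=
  ∃ τ : ℝ → ℝ → ℝ,
    -- (i): small perturbations along the trajectory preserve approximate reachability
    (∀ t1 t2 : ℝ, 0 ≤ t1 → t1 < t2 → t2 ≤ T →
      0 < τ t1 t2 ∧ ∃ ε0 > (0:ℝ), ∀ ε : ℝ, 0 < ε → ε ≤ ε0 → ∃ δ > (0:ℝ),
        ∀ ya ∈ Metric.closedBall (z t1 + hp t1) δ ∩ interior C,
          ∃ yb ∈ Metric.closedBall (z t2 + hp t2) ε ∩ interior C,
            ReachWithin F B C ya yb (τ t1 t2)) ∧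
    -- (ii): near the terminal time, `y1` is reachable quickly from a neighbourhood
    (∃ δ : ℝ → ℝ, ∃ t0 : ℝ, t0 < T ∧
      (∀ t : ℝ, t0 ≤ t → t < T → 0 < δ t ∧
        ∀ y ∈ Metric.closedBall (z t + hp t) (δ t) ∩ interior C,
          minTime F B C y y1 ≠ ⊤) ∧
      (∀ ε > (0:ℝ), ∃ t1 : ℝ, t0 ≤ t1 ∧ t1 < T ∧ ∀ t : ℝ, t1 ≤ t → t < T →
        ∀ y ∈ Metric.closedBall (z t + hp t) (δ t) ∩ interior C,
          minTime F B C y y1 ≤ ENNReal.ofReal ε)) ∧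
    -- (iii): limsup_{Δt → 0} sup_{t ∈ [0, T - Δt]} τ(t, t + Δt) / Δt ≤ 1
    (∀ c > (1:ℝ), ∃ Δ0 > (0:ℝ), ∀ Δt : ℝ, 0 < Δt → Δt ≤ Δ0 →
      ∀ t : ℝ, 0 ≤ t → t ≤ T - Δt → τ t (t + Δt) ≤ c * Δt)

/-- The pliable controllability time `T̃_C(y0, y1)` (with `inf ∅ = ∞`). -/
noncomputable def tildeTime {n m : ℕ} (F : Euc n → Euc n) (B : Euc m →ₗ[ℝ] Euc n)
    (C : Set (Euc n)) (y0 y1 : Euc n) : ℝ≥0∞ :=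
  sInf (ENNReal.ofReal ''
    {T | 0 < T ∧ ∃ z hp : ℝ → Euc n,
      HatSol F (LinearMap.range B)ᗮ C y0 y1 T z hp ∧ Pliable F B C y1 T z hp})

lemma gronwall_aux {L e t Tj : ℝ} (hL : 0 < L) (he : 0 ≤ e) (ht : 0 ≤ t) (htT : t ≤ Tj)
    (hT1 : Tj ≤ 1) : gronwallBound 0 L e t ≤ e * Real.exp L * Tj := by
  rw [gronwallBound_of_K_ne_0 hL.ne']
  have hineq := Real.add_one_le_exp (-(L * t))
  have hinv : Real.exp (-(L * t)) * Real.exp (L * t) = 1 := by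
    rw [← Real.exp_add]; simp
  have h1 : Real.exp (L * t) - 1 ≤ L * t * Real.exp (L * t) := by
    nlinarith [Real.exp_pos (L * t), mul_le_mul_of_nonneg_right hineq (Real.exp_pos (L * t)).le]
  have hexp : Real.exp (L * t) ≤ Real.exp L := by
    apply Real.exp_le_exp.2; nlinarith
  have h2 : e / L * (Real.exp (L * t) - 1) ≤ e / L * (L * t * Real.exp (L * t)) :=
    mul_le_mul_of_nonneg_left h1 (div_nonneg he hL.le)
  have h3 : e / L * (L * t * Real.exp (L * t)) = e * t * Real.exp (L * t) := by
    field_simp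
  have h4 : e * t * Real.exp (L * t) ≤ e * Real.exp L * Tj := by
    calc e * t * Real.exp (L * t) ≤ e * t * Real.exp L :=
          mul_le_mul_of_nonneg_left hexp (mul_nonneg he ht)
      _ ≤ e * Tj * Real.exp L :=
          mul_le_mul_of_nonneg_right (mul_le_mul_of_nonneg_left htT he) (Real.exp_pos L).le
      _ = e * Real.exp L * Tj := by ring
  rw [h3] at h2
  nlinarith [Real.exp_pos (L * t)]

set_option maxHeartbeats 1000000 in
lemma jump_lemma {n m : ℕ} {F : Euc n → Euc n} {L_F : ℝ} (hLF : 0 < L_F)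
    (hF : LipschitzWith L_F.toNNReal F) {B : Euc m →ₗ[ℝ] Euc n}
    {C : Set (Euc n)} (hconv : Convex ℝ C) {y0 x0 : Euc n}
    (hy0 : y0 ∈ interior C) (hx0 : x0 ∈ C) (hd : x0 - y0 ∈ LinearMap.range B)
    {ρ ε : ℝ} (hρ : 0 < ρ) (hε : 0 < ε) :
    ∃ w ∈ Metric.closedBall x0 ρ ∩ interior C, ∃ Tj ∈ ctrlTimes F B C y0 w, Tj ≤ ε := by
  obtain ⟨w0, hw0⟩ := hd
  set d : Euc n := x0 - y0 with hdd
  clear_value d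
  have hLcoe : (L_F.toNNReal : ℝ) = L_F := Real.coe_toNNReal L_F hLF.le
  have hFbd : ∀ x : Euc n, ‖F x‖ ≤ ‖F y0‖ + L_F * ‖x - y0‖ := by
    intro x
    have h := hF.norm_sub_le x y0
    rw [hLcoe] at h
    calc ‖F x‖ ≤ ‖F x - F y0‖ + ‖F y0‖ := by
          simpa using norm_add_le (F x - F y0) (F y0)
      _ ≤ ‖F y0‖ + L_F * ‖x - y0‖ := by linarith
  -- choice of θ
  obtain ⟨θ, hθ0, hθ1, hθρ⟩ : ∃ θ : ℝ, 0 < θ ∧ θ < 1 ∧ (1 - θ) * ‖d‖ ≤ ρ / 2 := by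
    refine ⟨1 - min (ρ / (2 * (‖d‖ + 1))) (1/2), ?_, ?_, ?_⟩
    · have h1 : min (ρ / (2 * (‖d‖ + 1))) (1/2) ≤ 1/2 := min_le_right _ _
      linarith
    · have h1 : 0 < min (ρ / (2 * (‖d‖ + 1))) (1/2) := lt_min (by positivity) (by norm_num)
      linarith
    · have h1 : 1 - (1 - min (ρ / (2 * (‖d‖ + 1))) (1/2)) ≤ ρ / (2 * (‖d‖ + 1)) := by
        simp [min_le_left]
      have h3 : (ρ / (2 * (‖d‖ + 1))) * ‖d‖ + (ρ / (2 * (‖d‖ + 1))) = ρ / 2 := by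
        field_simp
      have hA : (0:ℝ) ≤ ρ / (2 * (‖d‖ + 1)) := by positivity
      nlinarith [mul_le_mul_of_nonneg_right h1 (norm_nonneg d)]
  -- the segment K and thickening radius
  set K : Set (Euc n) := (fun s : ℝ => y0 + (s * θ) • d) '' (Icc 0 1) with hKdef
  have hKsub : K ⊆ interior C := by
    rintro _ ⟨s, hs, rfl⟩
    have h1 : (0:ℝ) < 1 - s * θ := by nlinarith [hs.1, hs.2]
    have h2 : (0:ℝ) ≤ s * θ := mul_nonneg hs.1 hθ0.le
    have h := hconv.combo_interior_closure_mem_interior hy0 (subset_closure hx0) h1 h2 (by ring)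
    convert h using 1
    rw [hdd]
    module
  have hKcpt : IsCompact K := (isCompact_Icc).image (by continuity)
  obtain ⟨rK, hrK, hthick⟩ := hKcpt.exists_thickening_subset_open isOpen_interior hKsub
  -- constants
  obtain ⟨e', he'0, he'bd, he'd⟩ : ∃ e' : ℝ, 0 ≤ e' ∧ (∀ x : Euc n, ‖F x‖ ≤ e' - L_F * ‖d‖
      + L_F * ‖x - y0‖) ∧ L_F * ‖d‖ ≤ e' := by
    refine ⟨‖F y0‖ + L_F * ‖d‖, by positivity, fun x => ?_, by
      nlinarith [norm_nonneg (F y0)]⟩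
    have := hFbd x; linarith
  obtain ⟨Mc, hMc0, hMc1⟩ : ∃ Mc : ℝ, 0 < Mc ∧ e' * Real.exp L_F ≤ Mc :=
    ⟨e' * Real.exp L_F + 1, by positivity, by linarith⟩
  obtain ⟨R, hR0, hRd⟩ : ∃ R : ℝ, 0 < R ∧ ‖d‖ + 1 = R := ⟨‖d‖ + 1, by positivity, rfl⟩
  obtain ⟨CP, hCP1, hCPbd⟩ : ∃ CP : ℝ, 1 ≤ CP ∧
      ∀ x : Euc n, ‖x - y0‖ ≤ R → ‖F x‖ ≤ CP - 1 := by
    refine ⟨‖F y0‖ + L_F * R + 1, by nlinarith [norm_nonneg (F y0)], fun x hx => ?_⟩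
    have h1 := hFbd x
    nlinarith
  have hCP0 : (0:ℝ) < CP := by linarith
  -- the time Tj
  obtain ⟨Tj, hTj0, hTjε, hTj1, hTjCP2, hMcTj_rK, hMcTj_ρ⟩ : ∃ Tj : ℝ, 0 < Tj ∧ Tj ≤ ε ∧
      Tj ≤ 1 ∧ (CP - 1) * Tj ≤ 1 ∧ Mc * Tj ≤ rK / 2 ∧ Mc * Tj ≤ ρ / 2 := by
    refine ⟨min ε (min 1 (min (1 / CP) (min (rK / (2 * Mc)) (ρ / (2 * Mc))))),
      lt_min hε (lt_min one_pos (lt_min (by positivity) (lt_min (by positivity) (by positivity)))),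
      min_le_left _ _, le_trans (min_le_right _ _) (min_le_left _ _), ?_, ?_, ?_⟩
    · have h1 : min ε (min 1 (min (1 / CP) (min (rK / (2 * Mc)) (ρ / (2 * Mc))))) ≤ 1 / CP :=
        le_trans (min_le_right _ _) (le_trans (min_le_right _ _) (min_le_left _ _))
      have h2 := mul_le_mul_of_nonneg_left h1 (by linarith : (0:ℝ) ≤ CP - 1)
      have h3 : (CP - 1) * (1 / CP) ≤ 1 := by
        rw [mul_one_div, div_le_one hCP0]; linarith
      linarith
    · have h1 : min ε (min 1 (min (1 / CP) (min (rK / (2 * Mc)) (ρ / (2 * Mc))))) ≤ rK / (2 * Mc) :=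
        le_trans (min_le_right _ _) (le_trans (min_le_right _ _)
          (le_trans (min_le_right _ _) (min_le_left _ _)))
      have h2 := mul_le_mul_of_nonneg_left h1 hMc0.le
      have h3 : Mc * (rK / (2 * Mc)) = rK / 2 := by field_simp
      linarith
    · have h1 : min ε (min 1 (min (1 / CP) (min (rK / (2 * Mc)) (ρ / (2 * Mc))))) ≤ ρ / (2 * Mc) :=
        le_trans (min_le_right _ _) (le_trans (min_le_right _ _)
          (le_trans (min_le_right _ _) (min_le_right _ _)))
      have h2 := mul_le_mul_of_nonneg_left h1 hMc0.le
      have h3 : Mc * (ρ / (2 * Mc)) = ρ / 2 := by field_simp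
      linarith
  -- velocity
  set vel : Euc n := (θ / Tj) • d with hveldef
  have hvelnorm : ‖vel‖ = (θ / Tj) * ‖d‖ := by
    rw [hveldef, norm_smul, Real.norm_eq_abs, abs_of_pos (by positivity)]
  have hvelTj : Tj • vel = θ • d := by
    rw [hveldef, smul_smul, mul_div_cancel₀ _ hTj0.ne']
  have htvel : ∀ t : ℝ, 0 ≤ t → t ≤ Tj → ‖t • vel‖ ≤ ‖d‖ := by
    intro t ht0 htT
    rw [norm_smul, Real.norm_eq_abs, abs_of_nonneg ht0, hvelnorm]
    have htd : t * (θ / Tj) ≤ 1 := by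
      rw [mul_div_assoc']
      rw [div_le_one hTj0]
      nlinarith
    have htd0 : 0 ≤ t * (θ / Tj) := by positivity
    calc t * (θ / Tj * ‖d‖) = (t * (θ / Tj)) * ‖d‖ := by ring
      _ ≤ 1 * ‖d‖ := mul_le_mul_of_nonneg_right htd (norm_nonneg d)
      _ = ‖d‖ := one_mul _
  clear_value vel
  -- Picard-Lindelöf setup
  have hLnn : 0 ≤ CP - 1 + θ / Tj * ‖d‖ := by
    have := norm_nonneg vel; rw [hvelnorm] at this; linarith
  have hpl : IsPicardLindelof (fun _ x => F x + vel) (tmin := 0) (tmax := Tj)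
      ⟨0, le_refl 0, hTj0.le⟩ y0 R.toNNReal 0 (CP - 1 + θ / Tj * ‖d‖).toNNReal L_F.toNNReal := by
    refine ⟨?_, fun x _ => continuousOn_const, ?_, ?_⟩
    · intro t _
      apply LipschitzWith.lipschitzOnWith
      intro x y
      simpa [edist_add_right] using hF x y
    · intro t _ x hx
      have h1 : ‖F x‖ ≤ CP - 1 := by
        apply hCPbd
        have h2 := Metric.mem_closedBall.1 hx
        rwa [dist_eq_norm, Real.coe_toNNReal _ hR0.le] at h2
      refine le_trans ?_ (Real.le_coe_toNNReal _)
      calc ‖F x + vel‖ ≤ ‖F x‖ + ‖vel‖ := norm_add_le _ _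
        _ ≤ (CP - 1) + θ / Tj * ‖d‖ := by rw [hvelnorm]; linarith
    · suffices key : (CP - 1 + θ / Tj * ‖d‖) * Tj ≤ R by
        simpa [Real.coe_toNNReal _ hLnn, Real.coe_toNNReal _ hR0.le, max_eq_left hTj0.le] using key
      have h2 : (θ / Tj * ‖d‖) * Tj = θ * ‖d‖ := by
        field_simp
      have h3 : θ * ‖d‖ ≤ ‖d‖ := by nlinarith [norm_nonneg d]
      calc (CP - 1 + θ / Tj * ‖d‖) * Tj = (CP - 1) * Tj + (θ / Tj * ‖d‖) * Tj := by ring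
        _ ≤ 1 + ‖d‖ := by rw [h2]; linarith
        _ = R := by rw [← hRd]; ring
  obtain ⟨y, hy0'', hyderiv⟩ := hpl.exists_eq_forall_mem_Icc_hasDerivWithinAt₀
  have hy0' : y 0 = y0 := hy0''
  have hycont : ContinuousOn y (Icc 0 Tj) := fun t ht => (hyderiv t ht).continuousWithinAt
  -- Gronwall estimate on f t = y t - y0 - t • vel
  set f : ℝ → Euc n := fun t => y t - y0 - t • vel with hfdef
  have hfcont : ContinuousOn f (Icc 0 Tj) := by
    apply ContinuousOn.sub (hycont.sub continuousOn_const)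
    exact (continuous_id.smul continuous_const).continuousOn
  have hfderiv : ∀ t ∈ Ico (0:ℝ) Tj, HasDerivWithinAt f (F (y t)) (Ici t) t := by
    intro t ht
    have h1 : HasDerivWithinAt y (F (y t) + vel) (Ici t) t := by
      apply (hyderiv t ⟨ht.1, ht.2.le⟩).mono_of_mem_nhdsWithin
      exact Filter.mem_of_superset (Icc_mem_nhdsGE_of_mem ⟨le_refl t, ht.2⟩)
        (Icc_subset_Icc ht.1 le_rfl)
    have h2 : HasDerivWithinAt (fun s : ℝ => y0 + s • vel) vel (Ici t) t := by
      simpa using ((hasDerivWithinAt_id t (Ici t)).smul_const vel).const_add y0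
    have h3 := h1.sub h2
    simp only [add_sub_cancel_right] at h3
    have hfeq : f = fun s => y s - (y0 + s • vel) := by
      funext s; rw [hfdef]; simp [sub_sub]
    rw [hfeq]
    exact h3
  have hbound : ∀ t ∈ Ico (0:ℝ) Tj, ‖F (y t)‖ ≤ L_F * ‖f t‖ + e' := by
    intro t ht
    have h1 := he'bd (y t)
    have h2 : ‖y t - y0‖ ≤ ‖f t‖ + ‖t • vel‖ := by
      have h4 : y t - y0 = f t + t • vel := by rw [hfdef]; exact (sub_add_cancel _ _).symm
      rw [h4]; exact norm_add_le _ _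
    have h3 := htvel t ht.1 ht.2.le
    nlinarith [norm_nonneg (f t)]
  have hgron : ∀ t ∈ Icc (0:ℝ) Tj, ‖f t‖ ≤ e' * Real.exp L_F * Tj := by
    intro t ht
    have h0 : ‖f 0‖ ≤ 0 := by
      rw [hfdef]; simp [hy0']
    have h := norm_le_gronwallBound_of_norm_deriv_right_le hfcont hfderiv h0 hbound t ht
    rw [sub_zero] at h
    exact h.trans (gronwall_aux hLF he'0 ht.1 ht.2 hTj1)
  have hdev : ∀ t ∈ Icc (0:ℝ) Tj, ‖f t‖ ≤ Mc * Tj := by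
    intro t ht
    refine (hgron t ht).trans ?_
    exact mul_le_mul_of_nonneg_right hMc1 hTj0.le
  -- trajectory stays in interior C
  have hmem : ∀ t ∈ Icc (0:ℝ) Tj, y t ∈ interior C := by
    intro t ht
    apply hthick
    rw [Metric.mem_thickening_iff]
    refine ⟨y0 + ((t / Tj) * θ) • d, ⟨t / Tj, ⟨div_nonneg ht.1 hTj0.le, (div_le_one hTj0).2 ht.2⟩,
      rfl⟩, ?_⟩
    have heq : y t - (y0 + ((t / Tj) * θ) • d) = f t := by
      have h5 : ((t / Tj) * θ) • d = t • vel := by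
        rw [hveldef, smul_smul]
        congr 1
        field_simp
      rw [hfdef, h5]
      abel
    rw [dist_eq_norm, heq]
    have h1 := hdev t ht
    linarith
  -- conclusion
  refine ⟨y Tj, ⟨?_, hmem Tj ⟨hTj0.le, le_refl Tj⟩⟩, Tj, ⟨hTj0, fun _ => (θ / Tj) • w0, y,
    measurable_const, ⟨‖(θ / Tj) • w0‖, fun t _ => le_refl _⟩, hycont, ?_, ?_, ?_, hy0', rfl⟩, hTjε⟩
  · -- y Tj ∈ closedBall x0 ρ
    rw [Metric.mem_closedBall, dist_eq_norm]
    have heq : y Tj - x0 = f Tj + (θ • d + y0 - x0) := by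
      simp only [hfdef]
      rw [hvelTj]; abel
    rw [heq]
    have h1 : ‖θ • d + y0 - x0‖ = (1 - θ) * ‖d‖ := by
      have h4 : θ • d + y0 - x0 = -((1 - θ) • d) := by
        rw [hdd]; module
      rw [h4, norm_neg, norm_smul, Real.norm_eq_abs, abs_of_nonneg (by linarith)]
    have h2 := hdev Tj ⟨hTj0.le, le_refl Tj⟩
    calc ‖f Tj + (θ • d + y0 - x0)‖ ≤ ‖f Tj‖ + ‖θ • d + y0 - x0‖ := norm_add_le _ _
      _ ≤ ρ / 2 + ρ / 2 := by rw [h1]; exact add_le_add (h2.trans hMcTj_ρ) hθρ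
      _ = ρ := by ring
  · -- interval integrable
    have hBu : B ((θ / Tj) • w0) = vel := by
      rw [B.map_smul, hw0, hveldef]
    have h6 : (fun s => F (y s) + B ((θ / Tj) • w0)) = fun s => F (y s) + vel := by
      funext s; rw [hBu]
    rw [h6]
    apply ContinuousOn.intervalIntegrable
    rw [uIcc_of_le hTj0.le]
    exact (hF.continuous.comp_continuousOn hycont).add continuousOn_const
  · -- integral equation
    intro t ht
    have hBu : B ((θ / Tj) • w0) = vel := by rw [B.map_smul, hw0, hveldef]
    have hieq : (∫ s in (0:ℝ)..t, (F (y s) + B ((θ / Tj) • w0))) = y t - y 0 := by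
      have h1 : (∫ s in (0:ℝ)..t, (F (y s) + B ((θ / Tj) • w0)))
          = ∫ s in (0:ℝ)..t, (F (y s) + vel) := by
        congr 1; funext s; rw [hBu]
      rw [h1]
      apply intervalIntegral.integral_eq_sub_of_hasDeriv_right_of_le ht.1
        (hycont.mono (Icc_subset_Icc le_rfl ht.2))
      · intro x hx
        apply (hyderiv x ⟨hx.1.le, hx.2.le.trans ht.2⟩).mono_of_mem_nhdsWithin
        exact Filter.mem_of_superset (Ioc_mem_nhdsGT_of_mem ⟨le_refl x, lt_of_lt_of_le hx.2 ht.2⟩)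
          (fun s hs => ⟨(hx.1.trans hs.1).le, hs.2⟩)
      · apply ContinuousOn.intervalIntegrable
        rw [uIcc_of_le ht.1]
        exact ((hF.continuous.comp_continuousOn (hycont.mono (Icc_subset_Icc le_rfl ht.2))).add
          continuousOn_const)
    rw [hieq, hy0']
    abel
  · intro t ht
    exact interior_subset (hmem t ht)

lemma ctrlTimes_trans {n m : ℕ} {F : Euc n → Euc n} {B : Euc m →ₗ[ℝ] Euc n}
    {C : Set (Euc n)} {a b c : Euc n} {T1 T2 : ℝ}
    (h1 : T1 ∈ ctrlTimes F B C a b) (h2 : T2 ∈ ctrlTimes F B C b c) :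
    T1 + T2 ∈ ctrlTimes F B C a c := by
  obtain ⟨hT1, u1, y1, hu1m, ⟨M1, hM1⟩, hy1c, hint1, heq1, hmem1, hy10, hy1T⟩ := h1
  obtain ⟨hT2, u2, y2, hu2m, ⟨M2, hM2⟩, hy2c, hint2, heq2, hmem2, hy20, hy2T⟩ := h2
  refine ⟨by linarith, fun t => if t ≤ T1 then u1 t else u2 (t - T1),
    fun t => if t ≤ T1 then y1 t else y2 (t - T1), ?_, ?_, ?_, ?_, ?_, ?_, ?_, ?_⟩
  · exact Measurable.ite measurableSet_Iic hu1m (hu2m.comp (measurable_id.sub measurable_const))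
  · refine ⟨max M1 M2, fun t ht => ?_⟩
    by_cases h : t ≤ T1
    · simp only [h, if_true]
      exact le_trans (hM1 t ⟨ht.1, h⟩) (le_max_left _ _)
    · simp only [h, if_false]
      push_neg at h
      exact le_trans (hM2 (t - T1) ⟨by linarith, by linarith [ht.2]⟩) (le_max_right _ _)
  · apply ContinuousOn.if
    · intro x hx
      have hfr : frontier {t : ℝ | t ≤ T1} = {T1} := by
        have : {t : ℝ | t ≤ T1} = Iic T1 := rfl
        rw [this, frontier_Iic]
      rw [hfr] at hx
      have hxT : x = T1 := hx.2
      subst hxT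
      simp [hy1T, hy20]
    · have hcl : closure {t : ℝ | t ≤ T1} = Iic T1 := by
        have : {t : ℝ | t ≤ T1} = Iic T1 := rfl
        rw [this, closure_Iic]
      rw [hcl]
      exact hy1c.mono (fun x hx => ⟨hx.1.1, hx.2⟩)
    · have hcl : closure {t : ℝ | ¬ t ≤ T1} = Ici T1 := by
        have : {t : ℝ | ¬ t ≤ T1} = Ioi T1 := by ext; simp
        rw [this, closure_Ioi]
      rw [hcl]
      refine hy2c.comp (continuousOn_id.sub continuousOn_const) (fun x hx => ?_)
      have h1 : (T1:ℝ) ≤ x := hx.2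
      have h2 : x ≤ T1 + T2 := hx.1.2
      exact ⟨by simp; linarith, by simp; linarith⟩
  · have piece1 : IntervalIntegrable (fun s => F ((fun t => if t ≤ T1 then y1 t else y2 (t - T1)) s)
        + B ((fun t => if t ≤ T1 then u1 t else u2 (t - T1)) s)) volume 0 T1 := by
      rw [intervalIntegrable_iff_integrableOn_Ioc_of_le hT1.le] at hint1 ⊢
      refine hint1.congr_fun (fun s hs => ?_) measurableSet_Ioc
      simp only [hs.2, if_true]
    have piece2 : IntervalIntegrable (fun s => F ((fun t => if t ≤ T1 then y1 t else y2 (t - T1)) s)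
        + B ((fun t => if t ≤ T1 then u1 t else u2 (t - T1)) s)) volume T1 (T1 + T2) := by
      have h2' := hint2.comp_sub_right T1
      rw [zero_add, add_comm T2 T1] at h2'
      rw [intervalIntegrable_iff_integrableOn_Ioc_of_le (by linarith)] at h2' ⊢
      refine h2'.congr_fun (fun s hs => ?_) measurableSet_Ioc
      have : ¬ s ≤ T1 := not_le.2 hs.1
      simp only [this, if_false]
    exact piece1.trans piece2
  · have piece1 : IntervalIntegrable (fun s => F ((fun t => if t ≤ T1 then y1 t else y2 (t - T1)) s)
        + B ((fun t => if t ≤ T1 then u1 t else u2 (t - T1)) s)) volume 0 T1 := by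
      rw [intervalIntegrable_iff_integrableOn_Ioc_of_le hT1.le] at hint1 ⊢
      refine hint1.congr_fun (fun s hs => ?_) measurableSet_Ioc
      simp only [hs.2, if_true]
    intro t ht
    by_cases h : t ≤ T1
    · simp only [h, if_true]
      rw [heq1 t ⟨ht.1, h⟩]
      congr 1
      refine intervalIntegral.integral_congr (fun s hs => ?_)
      rw [uIcc_of_le ht.1] at hs
      have : s ≤ T1 := le_trans hs.2 h
      simp only [this, if_true]
    · simp only [h, if_false]
      push_neg at h
      have htT : t - T1 ∈ Icc (0:ℝ) T2 := ⟨by linarith, by linarith [ht.2]⟩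
      rw [heq2 (t - T1) htT, hy1T.symm, heq1 T1 ⟨hT1.le, le_refl T1⟩]
      have e1 : (∫ s in (0:ℝ)..(t - T1), (F (y2 s) + B (u2 s)))
          = ∫ s in T1..t, (F (y2 (s - T1)) + B (u2 (s - T1))) := by
        rw [intervalIntegral.integral_comp_sub_right (fun s => F (y2 s) + B (u2 s)) T1]
        norm_num
      have e2 : (∫ s in T1..t, (F (y2 (s - T1)) + B (u2 (s - T1))))
          = ∫ s in T1..t, (F ((fun r => if r ≤ T1 then y1 r else y2 (r - T1)) s)
            + B ((fun r => if r ≤ T1 then u1 r else u2 (r - T1)) s)) := by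
        refine intervalIntegral.integral_congr_ae (MeasureTheory.ae_of_all _ (fun s hs => ?_))
        rw [uIoc_of_le h.le] at hs
        have : ¬ s ≤ T1 := not_le.2 hs.1
        simp only [this, if_false]
      have e3 : (∫ s in (0:ℝ)..T1, (F (y1 s) + B (u1 s)))
          = ∫ s in (0:ℝ)..T1, (F ((fun r => if r ≤ T1 then y1 r else y2 (r - T1)) s)
            + B ((fun r => if r ≤ T1 then u1 r else u2 (r - T1)) s)) := by
        refine intervalIntegral.integral_congr (fun s hs => ?_)
        rw [uIcc_of_le hT1.le] at hs
        simp only [hs.2, if_true]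
      rw [e1, e2, e3]
      have piece2' : IntervalIntegrable (fun s => F ((fun r => if r ≤ T1 then y1 r else y2 (r - T1)) s)
          + B ((fun r => if r ≤ T1 then u1 r else u2 (r - T1)) s)) volume T1 t := by
        have h2' := hint2.comp_sub_right T1
        rw [zero_add, add_comm T2 T1] at h2'
        rw [intervalIntegrable_iff_integrableOn_Ioc_of_le (by linarith [ht.2])]
        rw [intervalIntegrable_iff_integrableOn_Ioc_of_le (by linarith)] at h2'
        refine (h2'.mono_set (Ioc_subset_Ioc le_rfl ht.2)).congr_fun (fun s hs => ?_) measurableSet_Ioc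
        have : ¬ s ≤ T1 := not_le.2 hs.1
        simp only [this, if_false]
      rw [add_assoc, intervalIntegral.integral_add_adjacent_intervals piece1 piece2']
  · intro t ht
    by_cases h : t ≤ T1
    · simp only [h, if_true]; exact hmem1 t ⟨ht.1, h⟩
    · simp only [h, if_false]; push_neg at h
      exact hmem2 (t - T1) ⟨by linarith, by linarith [ht.2]⟩
  · simp only [hT1.le, if_true]; exact hy10
  · have h : ¬ (T1 + T2 ≤ T1) := by linarith
    simp only [h, if_false, add_sub_cancel_left]; exact hy2T

lemma minTime_le_ofReal {n m : ℕ} {F : Euc n → Euc n} {B : Euc m →ₗ[ℝ] Euc n}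
    {C : Set (Euc n)} {a b : Euc n} {T : ℝ} (h : T ∈ ctrlTimes F B C a b) :
    minTime F B C a b ≤ ENNReal.ofReal T :=
  sInf_le ⟨T, h, rfl⟩

lemma exists_ctrl_of_minTime_lt {n m : ℕ} {F : Euc n → Euc n} {B : Euc m →ₗ[ℝ] Euc n}
    {C : Set (Euc n)} {a b : Euc n} {s : ℝ} (hs : 0 < s)
    (h : minTime F B C a b < ENNReal.ofReal s) :
    ∃ T ∈ ctrlTimes F B C a b, T < s := by
  rw [minTime, sInf_lt_iff] at h
  obtain ⟨e, ⟨T, hT, rfl⟩, hlt⟩ := h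
  refine ⟨T, hT, ?_⟩
  rwa [ENNReal.ofReal_lt_ofReal_iff hs] at hlt

set_option maxHeartbeats 1000000 in
/-- Proposition 1 of the paper.  For all `y⁰, y¹` in the interior
of `C`, the minimal controllability time is bounded above by the pliable
controllability time: `T_C(y⁰, y¹) ≤ T̃_C(y⁰, y¹)`. -/
theorem minTime_le_tildeTime {n m : ℕ} (hmn : m < n)
    (F : Euc n → Euc n) (L_F : ℝ) (hLF : 0 < L_F) (hF : LipschitzWith L_F.toNNReal F)
    (B : Euc m →ₗ[ℝ] Euc n) (hB : Function.Injective B)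
    (C : Set (Euc n)) (hconv : Convex ℝ C) (hbdd : Bornology.IsBounded C)
    (hbdry : HasC1Boundary C)
    (y0 y1 : Euc n) (hy0 : y0 ∈ interior C) (hy1 : y1 ∈ interior C) :
    minTime F B C y0 y1 ≤ tildeTime F B C y0 y1 := by
  refine le_sInf ?_
  rintro e ⟨T, ⟨hT0, z, hp, hhat, hpli⟩, rfl⟩
  obtain ⟨hpm, hpmem, hintz, heqz, hxC, hzT⟩ := hhat
  -- the key estimate
  have key : ∀ η : ℝ, 0 < η → minTime F B C y0 y1 ≤ ENNReal.ofReal (T + η) := by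
    intro η hη
    obtain ⟨τ, hi, ⟨δ, t0, ht0T, hδpos, hii⟩, hiii⟩ := hpli
    -- constant c
    obtain ⟨c, hc1, hct⟩ : ∃ c : ℝ, 1 < c ∧ ∀ t' : ℝ, 0 ≤ t' → t' ≤ T → c * t' ≤ t' + η / 4 := by
      refine ⟨1 + η / (4 * (T + 1)), by
        have h0 : (0:ℝ) < η / (4 * (T + 1)) := by positivity
        linarith, fun t' ht'0 ht'T => ?_⟩
      have h1 : (η / (4 * (T + 1))) * t' ≤ (η / (4 * (T + 1))) * (T + 1) := by
        apply mul_le_mul_of_nonneg_left (by linarith) (by positivity)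
      have h2 : (η / (4 * (T + 1))) * (T + 1) = η / 4 := by field_simp
      nlinarith
    obtain ⟨Δ0, hΔ00, hΔ0⟩ := hiii c hc1
    -- terminal time t1 from (ii)
    obtain ⟨t1, ht01, ht1T, hsmall⟩ := hii (η / 8) (by positivity)
    -- choose tstar
    set tstar : ℝ := max t1 (T / 2) with htsdef
    have hts0 : 0 < tstar := lt_of_lt_of_le (by linarith) (le_max_right _ _)
    have htsT : tstar < T := max_lt ht1T (by linarith)
    have htst0 : t0 ≤ tstar := le_trans ht01 (le_max_left _ _)
    have ht1ts : t1 ≤ tstar := le_max_left _ _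
    have hδs0 : 0 < δ tstar := (hδpos tstar htst0 htsT).1
    clear_value tstar
    -- choose N and Δ
    obtain ⟨N, hN1, hNΔ0⟩ : ∃ N : ℕ, 1 ≤ N ∧ tstar ≤ (N : ℝ) * Δ0 := by
      obtain ⟨N0, hN0⟩ := exists_nat_ge (tstar / Δ0)
      refine ⟨N0 + 1, le_add_self, ?_⟩
      have h1 : tstar / Δ0 ≤ ((N0 + 1 : ℕ) : ℝ) := by push_cast; push_cast at hN0; linarith
      calc tstar = (tstar / Δ0) * Δ0 := by field_simp
        _ ≤ ((N0 + 1 : ℕ) : ℝ) * Δ0 := mul_le_mul_of_nonneg_right h1 hΔ00.le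
    have hNpos : (0:ℝ) < (N : ℝ) := by exact_mod_cast hN1
    set Δ : ℝ := tstar / N with hΔdef
    have hΔpos : 0 < Δ := by positivity
    have hNΔ : (N : ℝ) * Δ = tstar := by rw [hΔdef]; field_simp
    have hΔle : Δ ≤ Δ0 := by
      rw [hΔdef, div_le_iff₀ hNpos]
      calc tstar ≤ (N:ℝ) * Δ0 := hNΔ0
        _ = Δ0 * N := by ring
    clear_value Δ
    -- grid points
    set s : ℕ → ℝ := fun k => (k : ℝ) * Δ with hsdef
    have hs0 : s 0 = 0 := by rw [hsdef]; simp
    have hsN : s N = tstar := by rw [hsdef]; simpa using hNΔ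
    have hsmono : ∀ k : ℕ, k ≤ N → s k ≤ tstar := by
      intro k hk
      rw [hsdef, ← hNΔ]
      apply mul_le_mul_of_nonneg_right (by exact_mod_cast hk) hΔpos.le
    have hsadd : ∀ k : ℕ, s k + Δ = s (k + 1) := by
      intro k; rw [hsdef]; push_cast; ring
    have hsnn : ∀ k : ℕ, 0 ≤ s k := fun k => by rw [hsdef]; positivity
    -- the backward chain
    have chain : ∀ j : ℕ, j ≤ N → ∃ r : ℝ, 0 < r ∧
        ∀ ya ∈ Metric.closedBall (z (s (N - j)) + hp (s (N - j))) r ∩ interior C,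
          ∃ yb ∈ Metric.closedBall (z (s N) + hp (s N)) (δ tstar) ∩ interior C,
            ∃ Tc : ℝ, ((Tc = 0 ∧ ya = yb) ∨ Tc ∈ ctrlTimes F B C ya yb) ∧
              Tc ≤ (j : ℝ) * (c * Δ) := by
      intro j
      induction j with
      | zero =>
        intro _
        refine ⟨δ tstar, hδs0, fun ya hya => ⟨ya, by simpa using hya, 0, Or.inl ⟨rfl, rfl⟩, by simp⟩⟩
      | succ j ih =>
        intro hjN
        obtain ⟨r1, hr1, hrec⟩ := ih (by omega)
        have hk1 : N - j = (N - (j+1)) + 1 := by omega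
        have hkk : (N - (j + 1)) + 1 ≤ N := by omega
        have hstep2T : s ((N - (j+1)) + 1) ≤ T := le_trans (hsmono _ hkk) htsT.le
        have hstep12 : s (N - (j+1)) < s ((N - (j+1)) + 1) := by
          rw [← hsadd]; linarith
        obtain ⟨hτpos, ε0, hε00, hprop⟩ := hi (s (N - (j+1))) (s ((N - (j+1)) + 1))
          (hsnn _) hstep12 hstep2T
        obtain ⟨δk, hδk0, hδk⟩ := hprop (min r1 ε0) (lt_min hr1 hε00) (min_le_right _ _)
        refine ⟨δk, hδk0, fun ya hya => ?_⟩
        obtain ⟨ymid, hymid, hreach⟩ := hδk ya hya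
        have hymid' : ymid ∈ Metric.closedBall (z (s (N - j)) + hp (s (N - j))) r1
            ∩ interior C := by
          rw [hk1]
          exact ⟨Metric.closedBall_subset_closedBall (min_le_left _ _) hymid.1, hymid.2⟩
        obtain ⟨yb, hyb, Tc, hTc, hTcle⟩ := hrec ymid hymid'
        obtain ⟨Tm, hTm, hTmle⟩ := hreach
        have hτle : τ (s (N - (j+1))) (s ((N - (j+1)) + 1)) ≤ c * Δ := by
          have h := hΔ0 Δ hΔpos hΔle (s (N - (j+1))) (hsnn _) (by
            rw [le_sub_iff_add_le, hsadd]; exact hstep2T)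
          rwa [hsadd] at h
        have hcΔ0 : 0 ≤ c * Δ := by positivity
        rcases hTc with ⟨hTc0, heqy⟩ | hTcc
        · refine ⟨yb, hyb, Tm, Or.inr (heqy ▸ hTm), ?_⟩
          have hj0 : (0:ℝ) ≤ (j:ℝ) := Nat.cast_nonneg j
          push_cast
          nlinarith [hTmle.trans hτle]
        · refine ⟨yb, hyb, Tm + Tc, Or.inr (ctrlTimes_trans hTm hTcc), ?_⟩
          push_cast
          push_cast at hTcle
          nlinarith [hTmle.trans hτle]
    obtain ⟨r0, hr00, hchain⟩ := chain N le_rfl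
    -- initial jump from y0 into the first ball
    have hx0C : z 0 + hp 0 ∈ C := hxC 0 ⟨le_refl 0, hT0.le⟩
    have hx0B : (z 0 + hp 0) - y0 ∈ LinearMap.range B := by
      have hz0 : z 0 = projS (LinearMap.range B)ᗮ y0 := by
        have h := heqz 0 ⟨le_refl 0, hT0.le⟩
        simpa using h
      have h1 : y0 - projS (LinearMap.range B)ᗮ y0 ∈ ((LinearMap.range B)ᗮ)ᗮ :=
        Submodule.sub_starProjection_mem_orthogonal y0
      have h2 : hp 0 ∈ ((LinearMap.range B)ᗮ)ᗮ := hpmem 0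
      have h3 : (z 0 + hp 0) - y0 ∈ ((LinearMap.range B)ᗮ)ᗮ := by
        have h4 : (z 0 + hp 0) - y0 = hp 0 - (y0 - projS (LinearMap.range B)ᗮ y0) := by
          rw [hz0]; abel
        rw [h4]
        exact Submodule.sub_mem _ h2 h1
      rwa [Submodule.orthogonal_orthogonal] at h3
    obtain ⟨w, hw, Tj, hTj, hTjle⟩ := jump_lemma hLF hF hconv hy0 hx0C hx0B hr00
      (by positivity : (0:ℝ) < η / 4)
    -- run the chain from w
    have hw' : w ∈ Metric.closedBall (z (s (N - N)) + hp (s (N - N))) r0 ∩ interior C := by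
      have : N - N = 0 := by omega
      rw [this, hs0]
      exact hw
    obtain ⟨yb, hyb, Tc, hTc, hTcle⟩ := hchain w hw'
    -- final step from yb to y1
    have hybball : yb ∈ Metric.closedBall (z tstar + hp tstar) (δ tstar) ∩ interior C := by
      rwa [hsN] at hyb
    have hmt : minTime F B C yb y1 ≤ ENNReal.ofReal (η / 8) :=
      hsmall tstar ht1ts htsT yb hybball
    have hmtlt : minTime F B C yb y1 < ENNReal.ofReal (η / 4) :=
      lt_of_le_of_lt hmt (by
        apply ENNReal.ofReal_lt_ofReal_iff (by positivity) |>.2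
        linarith)
    obtain ⟨Tf, hTf, hTflt⟩ := exists_ctrl_of_minTime_lt (by positivity) hmtlt
    -- assemble the full trajectory
    have hfull : ∃ Ttot ∈ ctrlTimes F B C y0 y1, Ttot ≤ T + η := by
      have hbnd : (N : ℝ) * (c * Δ) ≤ T + η / 4 := by
        have h1 : (N:ℝ) * (c * Δ) = c * tstar := by rw [← hNΔ]; ring
        rw [h1]
        have := hct tstar hts0.le htsT.le
        linarith
      rcases hTc with ⟨hTc0, rfl⟩ | hTcc
      · refine ⟨Tj + Tf, ctrlTimes_trans hTj hTf, ?_⟩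
        linarith
      · refine ⟨Tj + Tc + Tf, ctrlTimes_trans (ctrlTimes_trans hTj hTcc) hTf, ?_⟩
        have : Tc ≤ T + η / 4 := le_trans hTcle hbnd
        linarith
    obtain ⟨Ttot, hTtot, hTtotle⟩ := hfull
    exact le_trans (minTime_le_ofReal hTtot) (ENNReal.ofReal_le_ofReal hTtotle)
  -- conclude from the key estimate
  refine ENNReal.le_of_forall_pos_le_add fun ε hε _ => ?_
  have h := key ε hε
  calc minTime F B C y0 y1 ≤ ENNReal.ofReal (T + ε) := h
    _ = ENNReal.ofReal T + ENNReal.ofReal ε := ENNReal.ofReal_add hT0.le hε.le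
    _ = ENNReal.ofReal T + ε := by rw [ENNReal.ofReal_coe_nnreal]
end
end
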